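/- arXiv:2505.00829 — 4 statements merged into one kernel-verified Lean document; each statement's English description precedes it below -/
import Mathlib

section
/- Let C be a finite cyclic group of order n acting on a finite set S, and let T, m be positive integers with T ∣ m, m ∣ n, and m/T squarefree. Then Σ_{d : T ∣ d ∣ m} (−1)^{Ω(m·d)} · M_d = (∏_{q prime, q ∣ m/T} (q − 1)) · Σ_{d : (m/T)·f_{m/T}(T) ∣ d, d ∣ n} gcd(T, d) · a_d, where the first sum runs over divisors d of m divisible by T and the second over divisors d of n divisible by (m/T)·f_{m/T}(T). -/
/-- The subgroup `C^m` of `m`-th powers of a (cyclic, hence commutative) group `C`. -/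
def powSubgroup (C : Type*) [CommGroup C] (m : ℕ) : Subgroup C :=
  (powMonoidHom m : C →* C).range

/-- `M_m`: the number of orbits of `C^m` on `S`. -/
noncomputable def numPowOrbits (C S : Type*) [CommGroup C] [MulAction C S] (m : ℕ) : ℕ :=
  Nat.card (MulAction.orbitRel.Quotient (powSubgroup C m) S)

/-- `a_d`: the number of `C`-orbits in `S` of cardinality `d`. -/
noncomputable def numOrbitsOfCard (C S : Type*) [Group C] [MulAction C S] (d : ℕ) : ℕ :=
  Nat.card {ω : MulAction.orbitRel.Quotient C S // Nat.card ω.orbit = d}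

/-- `Ω`: the number of prime factors counted with multiplicity. -/
def bigOmega (n : ℕ) : ℕ := n.primeFactorsList.length

/-- `f_k(t) = ∏_{p prime, p ∣ gcd(k,t)} p^{v_p(t)}`. -/
def fFun (k t : ℕ) : ℕ := ∏ p ∈ (Nat.gcd k t).primeFactors, p ^ (t.factorization p)

section AuxSection
open Finset

namespace Aux

lemma bigOmega_eq (n : ℕ) : bigOmega n = ArithmeticFunction.cardFactors n := by
  simp [bigOmega, ArithmeticFunction.cardFactors_apply]

lemma bigOmega_mul {a b : ℕ} (ha : a ≠ 0) (hb : b ≠ 0) :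
    bigOmega (a * b) = bigOmega a + bigOmega b := by
  simp [bigOmega_eq, ArithmeticFunction.cardFactors_mul ha hb]

lemma bigOmega_prime {p : ℕ} (hp : p.Prime) : bigOmega p = 1 := by
  simp [bigOmega_eq, ArithmeticFunction.cardFactors_apply_prime hp]

lemma bigOmega_prod_primes {P : Finset ℕ} (hP : ∀ p ∈ P, p.Prime) :
    bigOmega (∏ p ∈ P, p) = P.card := by
  classical
  induction P using Finset.induction with
  | empty => simp [bigOmega]
  | @insert q P hq ih =>
    rw [prod_insert hq, bigOmega_mul (hP q (mem_insert_self q P)).ne_zero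
      (Finset.prod_ne_zero_iff.2 fun p hp => (hP p (mem_insert_of_mem hp)).ne_zero),
      bigOmega_prime (hP q (mem_insert_self q P)), ih fun p hp => hP p (mem_insert_of_mem hp),
      card_insert_of_notMem hq]
    omega

lemma gcd_mul_prime {A e q : ℕ} (hA : A ≠ 0) (he : e ≠ 0) (hq : q.Prime) :
    Nat.gcd (A * q) e = Nat.gcd A e * (if q ^ (A.factorization q + 1) ∣ e then q else 1) := by
  have hAq : A * q ≠ 0 := mul_ne_zero hA hq.ne_zero
  have hg : Nat.gcd (A * q) e ≠ 0 := Nat.gcd_ne_zero_right he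
  have hg' : Nat.gcd A e ≠ 0 := Nat.gcd_ne_zero_right he
  by_cases hdvd : q ^ (A.factorization q + 1) ∣ e
  · rw [if_pos hdvd]
    have h1 : A.factorization q + 1 ≤ e.factorization q :=
      (Nat.Prime.pow_dvd_iff_le_factorization hq he).mp hdvd
    refine Nat.eq_of_factorization_eq hg (mul_ne_zero hg' hq.ne_zero) fun p => ?_
    rw [Nat.factorization_gcd hAq he, Nat.factorization_mul hg' hq.ne_zero,
      Nat.factorization_gcd hA he, Nat.factorization_mul hA hq.ne_zero]
    simp only [Finsupp.inf_apply, Finsupp.coe_add, Pi.add_apply, hq.factorization,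
      Finsupp.single_apply]
    rcases eq_or_ne q p with rfl | hpq
    · simp only [if_pos rfl]; norm_num; omega
    · simp only [if_neg hpq]; omega
  · rw [if_neg hdvd, mul_one]
    have h1 : e.factorization q < A.factorization q + 1 := by
      by_contra h
      exact hdvd ((Nat.Prime.pow_dvd_iff_le_factorization hq he).mpr (by omega))
    refine Nat.eq_of_factorization_eq hg hg' fun p => ?_
    rw [Nat.factorization_gcd hAq he, Nat.factorization_gcd hA he, Nat.factorization_mul hA
      hq.ne_zero]
    simp only [Finsupp.inf_apply, Finsupp.coe_add, Pi.add_apply, hq.factorization,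
      Finsupp.single_apply]
    rcases eq_or_ne q p with rfl | hpq
    · simp only [if_pos rfl]; norm_num; omega
    · simp only [if_neg hpq]; omega

lemma gcd_mul_prod {T e : ℕ} (hT : T ≠ 0) (he : e ≠ 0) {P : Finset ℕ} (hP : ∀ p ∈ P, p.Prime) :
    Nat.gcd (T * ∏ p ∈ P, p) e
      = Nat.gcd T e * ∏ p ∈ P, (if p ^ (T.factorization p + 1) ∣ e then p else 1) := by
  classical
  induction P using Finset.induction with
  | empty => simp
  | @insert q P hq ih =>
    have hqp : q.Prime := hP q (mem_insert_self q P)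
    have hP' : ∀ p ∈ P, p.Prime := fun p hp => hP p (mem_insert_of_mem hp)
    have hprod : (∏ p ∈ P, p) ≠ 0 := Finset.prod_ne_zero_iff.2 fun p hp => (hP' p hp).ne_zero
    have hTP : T * ∏ p ∈ P, p ≠ 0 := mul_ne_zero hT hprod
    rw [prod_insert hq, show T * (q * ∏ p ∈ P, p) = (T * ∏ p ∈ P, p) * q by ring,
      gcd_mul_prime hTP he hqp, ih hP', prod_insert hq]
    have hfq : (T * ∏ p ∈ P, p).factorization q = T.factorization q := by
      rw [Nat.factorization_mul hT hprod]
      have : (∏ p ∈ P, p).factorization q = 0 := by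
        have : q ∉ (∏ p ∈ P, p).primeFactors := by
          rw [Nat.primeFactors_prod hP']; exact hq
        rwa [← Nat.support_factorization, Finsupp.notMem_support_iff] at this
      simp [this]
    rw [hfq]; ring

lemma dvd_prod_pow_iff {e : ℕ} (he : e ≠ 0) {s : Finset ℕ} (hs : ∀ p ∈ s, p.Prime)
    (f : ℕ → ℕ) : (∏ p ∈ s, p ^ f p) ∣ e ↔ ∀ p ∈ s, p ^ f p ∣ e := by
  classical
  induction s using Finset.induction with
  | empty => simp [Nat.one_dvd]
  | @insert q P hq ih =>
    have hqp : q.Prime := hs q (mem_insert_self q P)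
    have hP' : ∀ p ∈ P, p.Prime := fun p hp => hs p (mem_insert_of_mem hp)
    rw [prod_insert hq]
    constructor
    · intro h p hp
      rcases mem_insert.mp hp with rfl | hp'
      · exact (dvd_mul_right _ _).trans h
      · exact ((Finset.dvd_prod_of_mem _ hp').trans (dvd_mul_left _ _)).trans h
    · intro h
      have hcop : Nat.Coprime (q ^ f q) (∏ p ∈ P, p ^ f p) := by
        apply Nat.Coprime.prod_right
        intro p hp
        exact Nat.Coprime.pow _ _ ((Nat.coprime_primes hqp (hP' p hp)).mpr
          (fun hh => hq (hh ▸ hp)))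
      exact hcop.mul_dvd_of_dvd_of_dvd (h q (mem_insert_self q P))
        ((ih hP').mpr fun p hp => h p (mem_insert_of_mem hp))

lemma fFun_eq {k T : ℕ} (hk : k ≠ 0) (hT : T ≠ 0) :
    fFun k T = ∏ p ∈ k.primeFactors, p ^ T.factorization p := by
  rw [fFun, Nat.primeFactors_gcd hk hT]
  refine Finset.prod_subset inter_subset_left fun p hp hp' => ?_
  have : p ∉ T.primeFactors := fun h => hp' (mem_inter.mpr ⟨hp, h⟩)
  rw [← Nat.support_factorization, Finsupp.notMem_support_iff] at this
  simp [this]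

lemma key_cond {k T e : ℕ} (hk : Squarefree k) (hT : T ≠ 0) (he : e ≠ 0) :
    k * fFun k T ∣ e ↔ ∀ p ∈ k.primeFactors, p ^ (T.factorization p + 1) ∣ e := by
  have hk0 : k ≠ 0 := hk.ne_zero
  have h1 : k * fFun k T = ∏ p ∈ k.primeFactors, p ^ (T.factorization p + 1) := by
    have h2 : ∏ p ∈ k.primeFactors, p ^ (T.factorization p + 1)
        = (∏ p ∈ k.primeFactors, p ^ T.factorization p) * ∏ p ∈ k.primeFactors, p := by
      rw [← Finset.prod_mul_distrib]
      exact Finset.prod_congr rfl fun p _ => pow_succ _ _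
    rw [fFun_eq hk0 hT, h2, Nat.prod_primeFactors_of_squarefree hk, mul_comm]
  rw [h1]
  exact dvd_prod_pow_iff he (fun p hp => Nat.prime_of_mem_primeFactors hp) _



lemma omega_squarefree {k : ℕ} (hk : Squarefree k) : bigOmega k = k.primeFactors.card := by
  rw [bigOmega, Nat.primeFactors, List.card_toFinset, hk.nodup_primeFactorsList.dedup]

lemma inner_sum {m T k e : ℕ} (hT : 0 < T) (hmk : m = T * k) (hk : Squarefree k) (he : e ≠ 0) :
    ∑ d ∈ m.divisors.filter (T ∣ ·), (-1 : ℤ) ^ bigOmega (m * d) * Nat.gcd d e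
      = (∏ q ∈ k.primeFactors, ((q : ℤ) - 1)) *
          (if k * fFun k T ∣ e then (Nat.gcd T e : ℤ) else 0) := by
  classical
  have hk0 : k ≠ 0 := hk.ne_zero
  have hT0 : T ≠ 0 := hT.ne'
  have hm0 : m ≠ 0 := by rw [hmk]; exact mul_ne_zero hT0 hk0
  set c : ℕ → ℤ := fun p => if p ^ (T.factorization p + 1) ∣ e then (p : ℤ) else 1 with hc
  -- Step 1: reindex d = T * u
  have step1 : ∑ d ∈ m.divisors.filter (T ∣ ·), (-1 : ℤ) ^ bigOmega (m * d) * Nat.gcd d e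
      = (-1 : ℤ) ^ bigOmega k *
          ∑ u ∈ k.divisors, (-1 : ℤ) ^ bigOmega u * Nat.gcd (T * u) e := by
    rw [Finset.mul_sum]
    refine Finset.sum_nbij' (fun d => d / T) (fun u => T * u) ?_ ?_ ?_ ?_ ?_
    · intro d hd
      rw [mem_filter, Nat.mem_divisors] at hd
      obtain ⟨⟨hdm, _⟩, hTd⟩ := hd
      obtain ⟨u, rfl⟩ := hTd
      rw [Nat.mul_div_cancel_left u hT, Nat.mem_divisors]
      exact ⟨(mul_dvd_mul_iff_left hT0).mp (hmk ▸ hdm), hk0⟩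
    · intro u hu
      rw [Nat.mem_divisors] at hu
      rw [mem_filter, Nat.mem_divisors]
      exact ⟨⟨hmk ▸ mul_dvd_mul_left T hu.1, hm0⟩, dvd_mul_right T u⟩
    · intro d hd
      rw [mem_filter] at hd
      exact Nat.mul_div_cancel' hd.2
    · intro u _
      exact Nat.mul_div_cancel_left u hT
    · intro d hd
      rw [mem_filter, Nat.mem_divisors] at hd
      obtain ⟨⟨hdm, _⟩, hTd⟩ := hd
      obtain ⟨u, rfl⟩ := hTd
      have hu0 : u ≠ 0 := by
        rintro rfl
        simp only [mul_zero] at hdm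
        exact hm0 (zero_dvd_iff.mp hdm)
      rw [Nat.mul_div_cancel_left u hT]
      have hΩ : bigOmega (m * (T * u))
          = (bigOmega T + bigOmega T) + (bigOmega k + bigOmega u) := by
        rw [hmk, bigOmega_mul (mul_ne_zero hT0 hk0) (mul_ne_zero hT0 hu0),
          bigOmega_mul hT0 hk0, bigOmega_mul hT0 hu0]
        omega
      rw [hΩ, pow_add, Even.neg_one_pow (⟨bigOmega T, rfl⟩ : Even (bigOmega T + bigOmega T)), one_mul, pow_add]
      ring
  rw [step1]
  -- Step 2: reindex u = ∏ P
  have step2 : ∑ u ∈ k.divisors, (-1 : ℤ) ^ bigOmega u * Nat.gcd (T * u) e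
      = ∑ P ∈ k.primeFactors.powerset,
          (-1 : ℤ) ^ P.card * ((Nat.gcd T e : ℤ) * ∏ p ∈ P, c p) := by
    refine Finset.sum_nbij' Nat.primeFactors (fun P => ∏ p ∈ P, p) ?_ ?_ ?_ ?_ ?_
    · intro u hu
      rw [Nat.mem_divisors] at hu
      exact mem_powerset.mpr (Nat.primeFactors_mono hu.1 hk0)
    · intro P hP
      rw [mem_powerset] at hP
      refine Nat.mem_divisors.mpr ⟨?_, hk0⟩
      calc (∏ p ∈ P, p) ∣ ∏ p ∈ k.primeFactors, p := Finset.prod_dvd_prod_of_subset _ _ _ hP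
      _ = k := Nat.prod_primeFactors_of_squarefree hk
    · intro u hu
      rw [Nat.mem_divisors] at hu
      exact Nat.prod_primeFactors_of_squarefree (hk.squarefree_of_dvd hu.1)
    · intro P hP
      rw [mem_powerset] at hP
      exact Nat.primeFactors_prod fun p hp => Nat.prime_of_mem_primeFactors (hP hp)
    · intro u hu
      rw [Nat.mem_divisors] at hu
      have hsq : Squarefree u := hk.squarefree_of_dvd hu.1
      have hup : ∀ p ∈ u.primeFactors, p.Prime := fun p hp => Nat.prime_of_mem_primeFactors hp
      have h1 : bigOmega u = u.primeFactors.card := omega_squarefree hsq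
      have h2 : Nat.gcd (T * u) e = Nat.gcd T e *
          ∏ p ∈ u.primeFactors, (if p ^ (T.factorization p + 1) ∣ e then p else 1) := by
        conv_lhs => rw [← Nat.prod_primeFactors_of_squarefree hsq]
        exact gcd_mul_prod hT0 he hup
      rw [h1, h2, hc]
      push_cast [apply_ite (Nat.cast : ℕ → ℤ)]
      ring
  rw [step2]
  -- Step 3: sum over powerset = product
  have step3 : ∑ P ∈ k.primeFactors.powerset,
        (-1 : ℤ) ^ P.card * ((Nat.gcd T e : ℤ) * ∏ p ∈ P, c p)
      = (Nat.gcd T e : ℤ) * ∏ p ∈ k.primeFactors, (1 - c p) := by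
    have h1 : ∀ p ∈ k.primeFactors, (1 - c p) = (-(c p) + 1) := fun p _ => by ring
    rw [Finset.prod_congr rfl h1, Finset.prod_add, Finset.mul_sum]
    refine Finset.sum_congr rfl fun P hP => ?_
    rw [Finset.prod_const_one, mul_one]
    have : ∏ p ∈ P, (-(c p)) = (-1 : ℤ) ^ P.card * ∏ p ∈ P, c p := by
      rw [show (fun p => -(c p)) = fun p => (-1) * c p from funext fun p => by ring]
      rw [Finset.prod_mul_distrib, Finset.prod_const]
    rw [this]
    ring
  rw [step3]
  simp only [key_cond hk hT0 he]
  -- Step 4: evaluate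
  by_cases hall : ∀ p ∈ k.primeFactors, p ^ (T.factorization p + 1) ∣ e
  · rw [if_pos hall]
    have h1 : ∀ p ∈ k.primeFactors, (1 - c p) = (-1) * ((p : ℤ) - 1) := fun p hp => by
      rw [hc]; simp only [if_pos (hall p hp)]; ring
    rw [Finset.prod_congr rfl h1, Finset.prod_mul_distrib, Finset.prod_const,
      omega_squarefree hk]
    have h2 : ((-1 : ℤ) ^ k.primeFactors.card) * ((-1 : ℤ) ^ k.primeFactors.card) = 1 := by
      rw [← pow_add]; exact Even.neg_one_pow ⟨k.primeFactors.card, rfl⟩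
    calc (-1 : ℤ) ^ k.primeFactors.card * ((Nat.gcd T e : ℤ) *
          ((-1 : ℤ) ^ k.primeFactors.card * ∏ q ∈ k.primeFactors, ((q : ℤ) - 1)))
        = ((-1 : ℤ) ^ k.primeFactors.card * (-1 : ℤ) ^ k.primeFactors.card) *
            ((Nat.gcd T e : ℤ) * ∏ q ∈ k.primeFactors, ((q : ℤ) - 1)) := by ring
      _ = _ := by rw [h2]; ring
  · rw [if_neg hall, mul_zero]
    push_neg at hall
    obtain ⟨p₀, hp₀, hnd⟩ := hall
    have : ∏ p ∈ k.primeFactors, (1 - c p) = 0 :=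
      Finset.prod_eq_zero hp₀ (by rw [hc]; simp only [if_neg hnd]; ring)
    rw [this]
    ring

end Aux

open Finset MulAction

namespace AuxG

variable {C : Type*} [CommGroup C] [IsCyclic C] [Fintype C]

lemma powSubgroup_eq_zpowers {g : C} (hg : ∀ x : C, x ∈ Subgroup.zpowers g) (k : ℕ) :
    powSubgroup C k = Subgroup.zpowers (g ^ k) := by
  have key : ∀ i : ℤ, (g ^ i) ^ k = (g ^ k) ^ i := fun i => by
    rw [← zpow_natCast (g ^ i) k, ← zpow_mul, mul_comm, zpow_mul, zpow_natCast]
  ext x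
  constructor
  · rintro ⟨y, rfl⟩
    obtain ⟨i, rfl⟩ := Subgroup.mem_zpowers_iff.mp (hg y)
    exact Subgroup.mem_zpowers_iff.mpr ⟨i, (key i).symm⟩
  · rintro ⟨i, rfl⟩
    exact ⟨g ^ i, key i⟩

lemma card_powSubgroup {g : C} (hg : ∀ x : C, x ∈ Subgroup.zpowers g) (k : ℕ) :
    Nat.card (powSubgroup C k) = Fintype.card C / Nat.gcd (Fintype.card C) k := by
  rw [powSubgroup_eq_zpowers hg, Nat.card_zpowers, orderOf_pow,
    orderOf_eq_card_of_forall_mem_zpowers hg, Nat.card_eq_fintype_card]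

lemma subgroup_eq_powSubgroup {g : C} (hg : ∀ x : C, x ∈ Subgroup.zpowers g)
    (K : Subgroup C) : K = powSubgroup C K.index := by
  have hn0 : (Nat.card C) ≠ 0 := Nat.card_pos.ne'
  have hle : powSubgroup C K.index ≤ K := by
    rintro x ⟨y, rfl⟩
    exact K.pow_index_mem y
  have hidvd : K.index ∣ Fintype.card C := by
    rw [← Nat.card_eq_fintype_card]; exact K.index_dvd_card
  have hcard : Nat.card (powSubgroup C K.index) = Nat.card K := by
    rw [card_powSubgroup hg, Nat.gcd_eq_right hidvd]
    have h2 : Nat.card K * K.index = Nat.card C := K.card_mul_index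
    have hi0 : 0 < K.index := Nat.pos_of_ne_zero Subgroup.index_ne_zero_of_finite
    rw [Nat.card_eq_fintype_card (α := C)] at h2
    exact Nat.div_eq_of_eq_mul_left hi0 h2.symm
  have hset : (powSubgroup C K.index : Set C) = (K : Set C) := by
    apply Set.eq_of_subset_of_ncard_le hle
    rw [← Nat.card_coe_set_eq, ← Nat.card_coe_set_eq]
    simp only [SetLike.coe_sort_coe]
    rw [hcard]
  exact (SetLike.ext' hset).symm

lemma zpowers_pow_sup (g : C) (a b : ℕ) :
    Subgroup.zpowers (g ^ a) ⊔ Subgroup.zpowers (g ^ b)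
      = Subgroup.zpowers (g ^ Nat.gcd a b) := by
  apply le_antisymm
  · apply sup_le <;> rw [Subgroup.zpowers_le]
    · refine Subgroup.mem_zpowers_iff.mpr ⟨(a / Nat.gcd a b : ℕ), ?_⟩
      rw [← zpow_natCast g (Nat.gcd a b), ← zpow_mul, ← Nat.cast_mul,
        Nat.mul_div_cancel' (Nat.gcd_dvd_left a b), zpow_natCast]
    · refine Subgroup.mem_zpowers_iff.mpr ⟨(b / Nat.gcd a b : ℕ), ?_⟩
      rw [← zpow_natCast g (Nat.gcd a b), ← zpow_mul, ← Nat.cast_mul,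
        Nat.mul_div_cancel' (Nat.gcd_dvd_right a b), zpow_natCast]
  · rw [Subgroup.zpowers_le]
    have hb := Nat.gcd_eq_gcd_ab a b
    have key : g ^ Nat.gcd a b = (g ^ a) ^ Nat.gcdA a b * (g ^ b) ^ Nat.gcdB a b := by
      rw [← zpow_natCast g a, ← zpow_natCast g b, ← zpow_mul, ← zpow_mul, ← zpow_add,
        ← zpow_natCast g (Nat.gcd a b), hb]
    rw [key]
    exact Subgroup.mul_mem_sup (Subgroup.zpow_mem _ (Subgroup.mem_zpowers _) _)
      (Subgroup.zpow_mem _ (Subgroup.mem_zpowers _) _)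

lemma index_powSubgroup {g : C} (hg : ∀ x : C, x ∈ Subgroup.zpowers g) {k : ℕ}
    (hk : k ∣ Fintype.card C) : (powSubgroup C k).index = k := by
  have h2 : Nat.card (powSubgroup C k) * (powSubgroup C k).index = Nat.card C :=
    Subgroup.card_mul_index _
  rw [card_powSubgroup hg, Nat.gcd_eq_right hk, Nat.card_eq_fintype_card] at h2
  have hn0 : Fintype.card C ≠ 0 := Fintype.card_ne_zero
  have hk0 : k ≠ 0 := by rintro rfl; rw [Nat.div_zero, zero_mul] at h2; exact hn0 h2.symm
  have hq : Fintype.card C / k ≠ 0 :=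
    Nat.div_ne_zero_iff.mpr ⟨hk0, Nat.le_of_dvd (Nat.pos_of_ne_zero hn0) hk⟩
  have h3 : Fintype.card C / k * (powSubgroup C k).index = Fintype.card C / k * k := by
    rw [h2, Nat.div_mul_cancel hk]
  exact Nat.eq_of_mul_eq_mul_left (Nat.pos_of_ne_zero hq) h3

variable {S : Type*} [Fintype S] [MulAction C S]

/-- Projection from the `H`-orbit quotient to the `C`-orbit quotient. -/
def toC (H : Subgroup C) (z : orbitRel.Quotient H S) : orbitRel.Quotient C S :=
  Quotient.liftOn' z Quotient.mk''
    (fun _ _ h => orbitRel.quotient_eq_of_quotient_subgroup_eq' (Quotient.sound' h))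

lemma toC_mk (H : Subgroup C) (a : S) :
    toC H (Quotient.mk'' a : orbitRel.Quotient H S) = Quotient.mk'' a := rfl

lemma card_fiber (H : Subgroup C) (ω : orbitRel.Quotient C S) :
    Nat.card {z : orbitRel.Quotient H S // toC H z = ω}
      = (H ⊔ stabilizer C ω.out).index := by
  classical
  set x₀ := ω.out with hx₀
  set K := H ⊔ stabilizer C x₀ with hK
  have hωmk : (Quotient.mk'' x₀ : orbitRel.Quotient C S) = ω := Quotient.out_eq' ω
  have hf : ∀ c : C, toC H (Quotient.mk'' (c • x₀) : orbitRel.Quotient H S) = ω := by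
    intro c
    rw [toC_mk, ← hωmk]
    exact Quotient.sound' ((orbitRel_apply).mpr (mem_orbit x₀ c))
  let f : C → {z : orbitRel.Quotient H S // toC H z = ω} := fun c =>
    ⟨Quotient.mk'' (c • x₀), hf c⟩
  have hwd : ∀ c c' : C, (QuotientGroup.leftRel K).r c c' → f c = f c' := by
    intro c c' h
    have h' : c⁻¹ * c' ∈ K := QuotientGroup.leftRel_apply.mp h
    obtain ⟨h₁, hh₁, s, hs, hmul⟩ := Subgroup.mem_sup.mp h'
    have hc' : c' = c * (h₁ * s) := by rw [hmul]; group
    have hsx : s • x₀ = x₀ := hs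
    have key : c' • x₀ = h₁ • (c • x₀) := by
      rw [hc', mul_smul, mul_smul, hsx, ← mul_smul, mul_comm, mul_smul]
    apply Subtype.ext
    show Quotient.mk'' (c • x₀) = Quotient.mk'' (c' • x₀)
    apply Quotient.sound'
    refine (orbitRel_apply).mpr (MulAction.mem_orbit_iff.mpr ⟨(⟨h₁, hh₁⟩ : H)⁻¹, ?_⟩)
    rw [Subgroup.smul_def, Subgroup.coe_inv, Subgroup.coe_mk, key, inv_smul_smul]
  let φ : C ⧸ K → {z : orbitRel.Quotient H S // toC H z = ω} := fun q =>
    Quotient.liftOn' q f hwd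
  have hinj : Function.Injective φ := by
    intro q q'
    induction q using Quotient.inductionOn' with
    | h c =>
      induction q' using Quotient.inductionOn' with
      | h c' =>
        intro h
        have h2 : (Quotient.mk'' (c • x₀) : orbitRel.Quotient H S)
            = Quotient.mk'' (c' • x₀) := Subtype.ext_iff.mp h
        obtain ⟨h₁, hh⟩ := MulAction.mem_orbit_iff.mp ((orbitRel_apply).mp
          (Quotient.exact' h2))
        rw [Subgroup.smul_def] at hh
        have hst : (c⁻¹ * ((h₁ : C) * c')) • x₀ = x₀ := by
          rw [mul_smul, mul_smul, hh, inv_smul_smul]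
        have hmem : c⁻¹ * ((h₁ : C) * c') ∈ stabilizer C x₀ := mem_stabilizer_iff.mpr hst
        apply Quotient.sound'
        refine QuotientGroup.leftRel_apply.mpr ?_
        have heq : c⁻¹ * c' = (↑(h₁⁻¹) : C) * (c⁻¹ * ((h₁ : C) * c')) := by
          rw [Subgroup.coe_inv]
          simp [mul_assoc, mul_comm, mul_left_comm]
        rw [heq]
        exact Subgroup.mul_mem_sup (SetLike.coe_mem _) hmem
  have hsurj : Function.Surjective φ := by
    rintro ⟨zz, hz⟩
    obtain ⟨y, hy⟩ := Quotient.exists_rep zz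
    have hy' : (Quotient.mk'' y : orbitRel.Quotient H S) = zz := hy
    subst hy'
    have h3 : (Quotient.mk'' y : orbitRel.Quotient C S) = Quotient.mk'' x₀ := by
      rw [← hωmk] at hz
      exact hz
    obtain ⟨c, hc⟩ := MulAction.mem_orbit_iff.mp ((orbitRel_apply).mp (Quotient.exact' h3))
    refine ⟨Quotient.mk'' c, Subtype.ext ?_⟩
    show Quotient.mk'' (c • x₀) = Quotient.mk'' y
    rw [hc]
  rw [Nat.card_congr (Equiv.ofBijective φ ⟨hinj, hsurj⟩).symm, ← Subgroup.index_eq_card]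

lemma card_orbit_dvd (ω : orbitRel.Quotient C S) :
    Nat.card ω.orbit ∣ Fintype.card C := by
  have horb : ω.orbit = orbit C ω.out :=
    orbitRel.Quotient.orbit_eq_orbit_out ω Quotient.out_eq'
  rw [horb, Nat.card_coe_set_eq, ← MulAction.index_stabilizer C ω.out, ← Nat.card_eq_fintype_card]
  exact Subgroup.index_dvd_card _

lemma numPowOrbits_eq (d : ℕ) (hd : d ∣ Fintype.card C) :
    numPowOrbits C S d
      = ∑ e ∈ (Fintype.card C).divisors, Nat.gcd d e * numOrbitsOfCard C S e := by
  classical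
  letI : Fintype (orbitRel.Quotient C S) := Fintype.ofFinite _
  letI : Fintype (orbitRel.Quotient (powSubgroup C d) S) := Fintype.ofFinite _
  obtain ⟨g, hg⟩ := IsCyclic.exists_generator (α := C)
  have hfib : ∀ ω : orbitRel.Quotient C S,
      Nat.card {z : orbitRel.Quotient (powSubgroup C d) S // toC (powSubgroup C d) z = ω}
        = Nat.gcd d (Nat.card ω.orbit) := by
    intro ω
    rw [card_fiber]
    have horb : ω.orbit = orbit C ω.out :=
      orbitRel.Quotient.orbit_eq_orbit_out ω Quotient.out_eq'
    have he : Nat.card ω.orbit = (stabilizer C ω.out).index := by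
      rw [horb, MulAction.index_stabilizer C ω.out, Nat.card_coe_set_eq]
    have hstab : stabilizer C ω.out = powSubgroup C (Nat.card ω.orbit) := by
      rw [he]; exact subgroup_eq_powSubgroup hg _
    rw [hstab, powSubgroup_eq_zpowers hg, powSubgroup_eq_zpowers hg, zpowers_pow_sup,
      ← powSubgroup_eq_zpowers hg]
    exact index_powSubgroup hg ((Nat.gcd_dvd_left _ _).trans hd)
  have h1 : numPowOrbits C S d
      = ∑ ω : orbitRel.Quotient C S, Nat.gcd d (Nat.card ω.orbit) := by
    rw [numPowOrbits, Nat.card_eq_fintype_card,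
      Fintype.card_congr (Equiv.sigmaFiberEquiv (toC (powSubgroup C d) (S := S))).symm,
      Fintype.card_sigma]
    exact Finset.sum_congr rfl fun ω _ => by rw [← Nat.card_eq_fintype_card, hfib ω]
  rw [h1]
  have hmaps : ∀ ω : orbitRel.Quotient C S, ω ∈ (univ : Finset _) →
      Nat.card ω.orbit ∈ (Fintype.card C).divisors := fun ω _ =>
    Nat.mem_divisors.mpr ⟨card_orbit_dvd ω, Fintype.card_ne_zero⟩
  rw [← Finset.sum_fiberwise_of_maps_to hmaps (fun ω => Nat.gcd d (Nat.card ω.orbit))]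
  refine Finset.sum_congr rfl fun e _ => ?_
  have hcongr : ∀ ω ∈ univ.filter (fun ω : orbitRel.Quotient C S => Nat.card ω.orbit = e),
      Nat.gcd d (Nat.card ω.orbit) = Nat.gcd d e := by
    intro ω hω
    rw [(Finset.mem_filter.mp hω).2]
  rw [Finset.sum_congr rfl hcongr, Finset.sum_const, smul_eq_mul, mul_comm]
  congr 1
  rw [numOrbitsOfCard, Nat.card_eq_fintype_card, Fintype.card_subtype]

end AuxG


open Finset in
/-- Lemma `tr`: for `T ∣ m ∣ n` with `m/T` squarefree,
`∑_{T∣d∣m} (−1)^{Ω(m·d)} M_d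
  = (∏_{q ∣ m/T prime} (q−1)) · ∑_{(m/T)·f_{m/T}(T) ∣ d ∣ n} gcd(T,d) a_d`. -/
theorem alternating_sum_numPowOrbits (C S : Type*) [CommGroup C] [IsCyclic C] [Fintype C]
    [Fintype S] [MulAction C S] (n m T : ℕ) (hn : Fintype.card C = n)
    (hT : 0 < T) (hTm : T ∣ m) (hm : m ∣ n) (hsf : Squarefree (m / T)) :
    ∑ d ∈ m.divisors.filter (T ∣ ·), (-1 : ℤ) ^ bigOmega (m * d) * numPowOrbits C S d =
      (∏ q ∈ (m / T).primeFactors, ((q : ℤ) - 1)) *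
        ∑ d ∈ n.divisors.filter ((m / T) * fFun (m / T) T ∣ ·),
          (Nat.gcd T d : ℤ) * numOrbitsOfCard C S d := by
  classical
  subst hn
  set n := Fintype.card C with hn
  set k := m / T with hkdef
  have hmk : m = T * k := (Nat.mul_div_cancel' hTm).symm
  have hn0 : n ≠ 0 := Fintype.card_ne_zero
  have hm0 : m ≠ 0 := fun h => hn0 (Nat.eq_zero_of_zero_dvd (h ▸ hm))
  -- Step 1: expand `numPowOrbits` via the orbit-counting formula
  have step1 : ∑ d ∈ m.divisors.filter (T ∣ ·),
        (-1 : ℤ) ^ bigOmega (m * d) * numPowOrbits C S d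
      = ∑ d ∈ m.divisors.filter (T ∣ ·), (-1 : ℤ) ^ bigOmega (m * d) *
          ∑ e ∈ n.divisors, (Nat.gcd d e : ℤ) * numOrbitsOfCard C S e := by
    refine Finset.sum_congr rfl fun d hd => ?_
    have hdm : d ∣ m := (Nat.mem_divisors.mp (Finset.mem_filter.mp hd).1).1
    have hdn : d ∣ n := hdm.trans hm
    rw [AuxG.numPowOrbits_eq d hdn]
    push_cast
    rfl
  rw [step1]
  -- Step 2: swap the two sums
  have step2 : ∑ d ∈ m.divisors.filter (T ∣ ·), (-1 : ℤ) ^ bigOmega (m * d) *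
          ∑ e ∈ n.divisors, (Nat.gcd d e : ℤ) * numOrbitsOfCard C S e
      = ∑ e ∈ n.divisors,
          (∑ d ∈ m.divisors.filter (T ∣ ·), (-1 : ℤ) ^ bigOmega (m * d) * (Nat.gcd d e : ℤ)) *
            numOrbitsOfCard C S e := by
    simp_rw [Finset.mul_sum, Finset.sum_mul]
    rw [Finset.sum_comm]
    exact Finset.sum_congr rfl fun e _ => Finset.sum_congr rfl fun d _ => by ring
  rw [step2]
  -- Step 3: evaluate the inner sums
  have step3 : ∀ e ∈ n.divisors,
      (∑ d ∈ m.divisors.filter (T ∣ ·), (-1 : ℤ) ^ bigOmega (m * d) * (Nat.gcd d e : ℤ)) *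
          numOrbitsOfCard C S e
        = ((∏ q ∈ k.primeFactors, ((q : ℤ) - 1)) *
            (if k * fFun k T ∣ e then ((Nat.gcd T e : ℤ) * numOrbitsOfCard C S e) else 0)) := by
    intro e he
    have he0 : e ≠ 0 := (Nat.pos_of_mem_divisors he).ne'
    rw [Aux.inner_sum hT hmk hsf he0]
    by_cases hcond : k * fFun k T ∣ e
    · rw [if_pos hcond, if_pos hcond]; ring
    · rw [if_neg hcond, if_neg hcond]; ring
  rw [Finset.sum_congr rfl step3, ← Finset.mul_sum]
  congr 1
  rw [Finset.sum_filter]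

end AuxSection
end

section
/- Let C be a finite cyclic group of order n acting on a finite set S, let m be a divisor of n, and let T = m / rad(m) where rad(m) is the radical of m (so m/T = rad(m) is the maximal squarefree choice). Then Σ_{d : T ∣ d ∣ m} (−1)^{Ω(m·d)} · M_d = T · (∏_{q prime, q ∣ m/T} (q − 1)) · Σ_{d : m ∣ d ∣ n} a_d. Equivalently, N_m = Σ_{d : m ∣ d, d ∣ n} a_d. -/
/-- `rad m`: the radical of `m`, the product of the distinct primes dividing `m`. -/
def rad (m : ℕ) : ℕ := ∏ p ∈ m.primeFactors, p

/-- `N_m = (1/T) · (∑_{T∣d∣m} (−1)^{Ω(m·d)} M_d) / ∏_{q ∣ m/T prime} (q−1)`,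
where `T = m / rad m`. -/
noncomputable def Nfun (C S : Type*) [CommGroup C] [MulAction C S] (m : ℕ) : ℚ :=
  (1 / (m / rad m : ℚ)) *
    (∑ d ∈ m.divisors.filter (m / rad m ∣ ·),
        (-1 : ℚ) ^ bigOmega (m * d) * numPowOrbits C S d) /
      ∏ q ∈ (m / (m / rad m)).primeFactors, ((q : ℚ) - 1)

section Aux

open Finset

lemma gcd_mul_of_coprime {a b : ℕ} (h : Nat.Coprime a b) (e : ℕ) :
    Nat.gcd (a * b) e = Nat.gcd a e * Nat.gcd b e := by
  apply Nat.dvd_antisymm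
  · obtain ⟨y, z, hy, hz, hyz⟩ := Nat.dvd_mul.mp (Nat.gcd_dvd_left (a * b) e)
    have hye : y ∣ e := (hyz ▸ dvd_mul_right y z).trans (Nat.gcd_dvd_right _ _)
    have hze : z ∣ e := (hyz ▸ dvd_mul_left z y).trans (Nat.gcd_dvd_right _ _)
    exact hyz ▸ mul_dvd_mul (Nat.dvd_gcd hy hye) (Nat.dvd_gcd hz hze)
  · have hcop : Nat.Coprime (Nat.gcd a e) (Nat.gcd b e) :=
      Nat.Coprime.coprime_dvd_left (Nat.gcd_dvd_left a e)
        (Nat.Coprime.coprime_dvd_right (Nat.gcd_dvd_left b e) h)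
    exact Nat.dvd_gcd (mul_dvd_mul (Nat.gcd_dvd_left _ _) (Nat.gcd_dvd_left _ _))
      (hcop.mul_dvd_of_dvd_of_dvd (Nat.gcd_dvd_right _ _) (Nat.gcd_dvd_right _ _))

lemma gcd_prod_pow {s : Finset ℕ} (hs : ∀ p ∈ s, p.Prime) (c : ℕ → ℕ) (e : ℕ) :
    Nat.gcd (∏ p ∈ s, p ^ c p) e = ∏ p ∈ s, Nat.gcd (p ^ c p) e := by
  induction s using Finset.induction with
  | empty => simp
  | @insert a s ha ih =>
    have hcop : Nat.Coprime (a ^ c a) (∏ p ∈ s, p ^ c p) := by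
      apply Nat.Coprime.prod_right
      intro q hq
      exact Nat.Coprime.pow _ _ ((Nat.coprime_primes (hs a (mem_insert_self a s))
        (hs q (mem_insert_of_mem hq))).mpr (fun h => ha (h ▸ hq)))
    rw [prod_insert ha, prod_insert ha, gcd_mul_of_coprime hcop,
      ih (fun p hp => hs p (mem_insert_of_mem hp))]

lemma gcd_pow_prime {p : ℕ} (hp : p.Prime) (k : ℕ) {e : ℕ} (he : e ≠ 0) :
    Nat.gcd (p ^ k) e = p ^ min k (e.factorization p) := by
  apply Nat.dvd_antisymm
  · obtain ⟨j, hj, hg⟩ := (Nat.dvd_prime_pow hp).mp (Nat.gcd_dvd_left _ _)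
    have hj2 : j ≤ e.factorization p := (hp.pow_dvd_iff_le_factorization he).mp
      (hg ▸ Nat.gcd_dvd_right (p ^ k) e)
    exact hg ▸ pow_dvd_pow p (le_min hj hj2)
  · exact Nat.dvd_gcd (pow_dvd_pow p (min_le_left _ _))
      ((hp.pow_dvd_iff_le_factorization he).mpr (min_le_right _ _))

lemma bigOmega_mul {a b : ℕ} (ha : a ≠ 0) (hb : b ≠ 0) :
    bigOmega (a * b) = bigOmega a + bigOmega b := by
  unfold bigOmega
  rw [(Nat.perm_primeFactorsList_mul ha hb).length_eq, List.length_append]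

lemma bigOmega_pow {p : ℕ} (hp : p ≠ 0) (_hp1 : p ≠ 1) (k : ℕ) :
    bigOmega (p ^ k) = k * bigOmega p := by
  induction k with
  | zero => simp [bigOmega]
  | succ k ih =>
    rw [pow_succ, bigOmega_mul (pow_ne_zero _ hp) hp, ih]
    ring

lemma bigOmega_prime {p : ℕ} (hp : p.Prime) : bigOmega p = 1 := by
  unfold bigOmega
  rw [Nat.primeFactorsList_prime hp]
  rfl

lemma bigOmega_prod_pow {s : Finset ℕ} (hs : ∀ p ∈ s, p.Prime) (c : ℕ → ℕ) :
    bigOmega (∏ p ∈ s, p ^ c p) = ∑ p ∈ s, c p := by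
  induction s using Finset.induction with
  | empty => simp [bigOmega]
  | @insert a s ha ih =>
    have hane : ∀ p ∈ s, (p:ℕ) ^ c p ≠ 0 := fun p hp =>
      pow_ne_zero _ (hs p (mem_insert_of_mem hp)).pos.ne'
    have hprod : (∏ p ∈ s, p ^ c p) ≠ 0 := Finset.prod_ne_zero_iff.mpr hane
    have hpa := hs a (mem_insert_self a s)
    rw [prod_insert ha, sum_insert ha, bigOmega_mul (pow_ne_zero _ hpa.pos.ne') hprod,
      bigOmega_pow hpa.pos.ne' hpa.one_lt.ne' _, bigOmega_prime hpa, mul_one,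
      ih (fun p hp => hs p (mem_insert_of_mem hp))]

lemma squarefree_prod_primes {s : Finset ℕ} (hs : ∀ p ∈ s, p.Prime) :
    Squarefree (∏ p ∈ s, p) := by
  induction s using Finset.induction with
  | empty => simpa using squarefree_one
  | @insert a s ha ih =>
    rw [prod_insert ha]
    have hpa := hs a (mem_insert_self a s)
    refine (Nat.squarefree_mul ?_).mpr ⟨hpa.squarefree, ih fun p hp => hs p (mem_insert_of_mem hp)⟩
    exact Nat.Coprime.prod_right fun q hq =>
      (Nat.coprime_primes hpa (hs q (mem_insert_of_mem hq))).mpr (fun h => ha (h ▸ hq))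

lemma prod_neg' {s : Finset ℕ} (f : ℕ → ℤ) :
    ∏ p ∈ s, (-f p) = (-1) ^ s.card * ∏ p ∈ s, f p := by
  rw [← prod_const, ← prod_mul_distrib]
  exact prod_congr rfl fun p _ => by ring

lemma keyB {m e : ℕ} (hm : m ≠ 0) (he : e ≠ 0) :
    ∑ d ∈ m.divisors.filter (m / rad m ∣ ·), (-1:ℤ) ^ bigOmega (m * d) * (Nat.gcd d e : ℤ)
      = if m ∣ e then ((m / rad m : ℕ) : ℤ) * ∏ q ∈ m.primeFactors, ((q:ℤ) - 1) else 0 := by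
  set P := m.primeFactors with hPdef
  have hP : ∀ p ∈ P, p.Prime := fun p hp => Nat.prime_of_mem_primeFactors hp
  set a : ℕ → ℕ := fun p => m.factorization p with hadef
  have ha1 : ∀ p ∈ P, 1 ≤ a p := fun p hp =>
    (Nat.prime_of_mem_primeFactors hp).factorization_pos_of_dvd hm
      (Nat.dvd_of_mem_primeFactors hp)
  have hmprod : m = ∏ p ∈ P, p ^ a p := by
    conv_lhs => rw [← Nat.factorization_prod_pow_eq_self hm]
    rw [Finsupp.prod]
    rfl
  set T : ℕ := ∏ p ∈ P, p ^ (a p - 1) with hTdef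
  have hT0 : T ≠ 0 :=
    Finset.prod_ne_zero_iff.mpr fun p hp => pow_ne_zero _ (hP p hp).pos.ne'
  have hrad : rad m = ∏ p ∈ P, p := rfl
  have hradpos : 0 < rad m := by
    rw [hrad]; exact prod_pos fun p hp => (hP p hp).pos
  have hsqf : Squarefree (rad m) := by rw [hrad]; exact squarefree_prod_primes hP
  have hTrad : T * rad m = m := by
    rw [hTdef, hrad, ← prod_mul_distrib]
    conv_rhs => rw [hmprod]
    exact prod_congr rfl fun p hp => by
      rw [← pow_succ, Nat.sub_add_cancel (ha1 p hp)]
  have hTm : m / rad m = T := Nat.div_eq_of_eq_mul_left hradpos hTrad.symm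
  rw [hTm]
  -- reindex the sum by subsets of P
  have hsum : ∀ F : ℕ → ℤ, ∑ d ∈ m.divisors.filter (T ∣ ·), F d
      = ∑ A ∈ P.powerset, F (T * ∏ p ∈ A, p) := by
    intro F
    refine (Finset.sum_nbij' (i := fun A => T * ∏ p ∈ A, p)
      (j := fun d => (d / T).primeFactors) ?_ ?_ ?_ ?_ ?_).symm
    · -- ∀ A ∈ powerset, T * ∏_A ∈ filter
      intro A hA
      rw [mem_powerset] at hA
      refine mem_filter.mpr ⟨Nat.mem_divisors.mpr ⟨?_, hm⟩, Dvd.intro _ rfl⟩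
      calc T * ∏ p ∈ A, p ∣ T * ∏ p ∈ P, p :=
            mul_dvd_mul_left T (Finset.prod_dvd_prod_of_subset _ _ _ hA)
        _ = m := by rw [← hrad, hTrad]
    · -- ∀ d ∈ filter, (d/T).primeFactors ∈ P.powerset
      intro d hd
      rw [mem_filter, Nat.mem_divisors] at hd
      obtain ⟨⟨hdm, _⟩, hTd⟩ := hd
      have hsrad : d / T ∣ rad m := by
        have h1 : T * (d / T) ∣ T * rad m := by
          rw [Nat.mul_div_cancel' hTd, hTrad]; exact hdm
        exact (Nat.mul_dvd_mul_iff_left (Nat.pos_of_ne_zero hT0)).mp h1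
      exact mem_powerset.mpr ((Nat.primeFactors_mono hsrad hradpos.ne').trans
        (by rw [hrad, Nat.primeFactors_prod hP]))
    · -- left inverse: A ↦ d ↦ A
      intro A hA
      rw [mem_powerset] at hA
      rw [Nat.mul_div_cancel_left _ (Nat.pos_of_ne_zero hT0),
        Nat.primeFactors_prod fun p hp => hP p (hA hp)]
    · -- right inverse: d ↦ A ↦ d
      intro d hd
      rw [mem_filter, Nat.mem_divisors] at hd
      obtain ⟨⟨hdm, _⟩, hTd⟩ := hd
      have hsrad : d / T ∣ rad m := by
        have h1 : T * (d / T) ∣ T * rad m := by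
          rw [Nat.mul_div_cancel' hTd, hTrad]; exact hdm
        exact (Nat.mul_dvd_mul_iff_left (Nat.pos_of_ne_zero hT0)).mp h1
      rw [Nat.prod_primeFactors_of_squarefree (hsqf.squarefree_of_dvd hsrad),
        Nat.mul_div_cancel' hTd]
    · intro A _
      rfl
  rw [hsum]
  have hterm : ∀ A ∈ P.powerset,
      (-1:ℤ) ^ bigOmega (m * (T * ∏ p ∈ A, p)) * (Nat.gcd (T * ∏ p ∈ A, p) e : ℤ)
      = (-1:ℤ) ^ bigOmega (m * T) *
        ((∏ p ∈ A, (-(Nat.gcd (p ^ a p) e : ℤ))) *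
          ∏ p ∈ P \ A, (Nat.gcd (p ^ (a p - 1)) e : ℤ)) := by
    intro A hA
    rw [mem_powerset] at hA
    have hprodA : (∏ p ∈ A, p) ≠ 0 :=
      Finset.prod_ne_zero_iff.mpr fun p hp => (hP p (hA hp)).pos.ne'
    have h1 : bigOmega (m * (T * ∏ p ∈ A, p)) = bigOmega (m * T) + A.card := by
      rw [← mul_assoc, bigOmega_mul (mul_ne_zero hm hT0) hprodA]
      congr 1
      calc bigOmega (∏ p ∈ A, p) = bigOmega (∏ p ∈ A, p ^ 1) := by simp
        _ = ∑ p ∈ A, 1 := bigOmega_prod_pow (fun p hp => hP p (hA hp)) _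
        _ = A.card := (Finset.card_eq_sum_ones A).symm
    have hTA : T * ∏ p ∈ A, p = ∏ p ∈ P, p ^ (if p ∈ A then a p else a p - 1) := by
      rw [hTdef, ← prod_sdiff hA (f := fun p => p ^ (a p - 1)),
        ← prod_sdiff hA (f := fun p => p ^ (if p ∈ A then a p else a p - 1)),
        mul_assoc, ← prod_mul_distrib]
      congr 1
      · exact prod_congr rfl fun p hp => by rw [if_neg (mem_sdiff.mp hp).2]
      · exact prod_congr rfl fun p hp => by
          rw [if_pos hp, ← pow_succ, Nat.sub_add_cancel (ha1 p (hA hp))]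
    have h2 : (Nat.gcd (T * ∏ p ∈ A, p) e : ℤ)
        = (∏ p ∈ A, (Nat.gcd (p ^ a p) e : ℤ)) *
          ∏ p ∈ P \ A, (Nat.gcd (p ^ (a p - 1)) e : ℤ) := by
      rw [hTA, gcd_prod_pow hP _ e, ← prod_sdiff hA
        (f := fun p => Nat.gcd (p ^ (if p ∈ A then a p else a p - 1)) e)]
      push_cast
      rw [mul_comm]
      congr 1
      · exact prod_congr rfl fun p hp => by rw [if_pos hp]
      · exact prod_congr rfl fun p hp => by rw [if_neg (mem_sdiff.mp hp).2]
    rw [h1, h2, pow_add, prod_neg']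
    ring
  rw [Finset.sum_congr rfl hterm, ← Finset.mul_sum, ← Finset.prod_add]
  by_cases hme : m ∣ e
  · rw [if_pos hme]
    have hv : ∀ p ∈ P, a p ≤ e.factorization p := fun p hp =>
      Finsupp.le_def.mp ((Nat.factorization_le_iff_dvd hm he).mpr hme) p
    have hfact : ∀ p ∈ P, (-(Nat.gcd (p ^ a p) e : ℤ)) + (Nat.gcd (p ^ (a p - 1)) e : ℤ)
        = -((p:ℤ) ^ (a p - 1) * ((p:ℤ) - 1)) := by
      intro p hp
      rw [gcd_pow_prime (hP p hp) _ he, gcd_pow_prime (hP p hp) _ he,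
        min_eq_left (hv p hp), min_eq_left ((Nat.sub_le _ _).trans (hv p hp))]
      have hps : ((p:ℕ) ^ a p : ℤ) = (p:ℤ) ^ (a p - 1) * p := by
        push_cast
        conv_lhs => rw [show a p = (a p - 1) + 1 from (Nat.sub_add_cancel (ha1 p hp)).symm]
        rw [pow_succ]
      push_cast at hps ⊢
      rw [hps]
      ring
    rw [prod_congr rfl hfact, prod_neg', prod_mul_distrib]
    have hΩ : bigOmega (m * T) + P.card = 2 * ∑ p ∈ P, a p := by
      have hbm : bigOmega m = ∑ p ∈ P, a p := by
        conv_lhs => rw [hmprod]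
        exact bigOmega_prod_pow hP _
      have hbT : bigOmega T = ∑ p ∈ P, (a p - 1) := by
        rw [hTdef]; exact bigOmega_prod_pow hP _
      rw [bigOmega_mul hm hT0, hbm, hbT, Finset.card_eq_sum_ones, add_assoc,
        ← Finset.sum_add_distrib, two_mul]
      congr 1
      exact Finset.sum_congr rfl fun p hp => Nat.sub_add_cancel (ha1 p hp)
    have hsign : (-1:ℤ) ^ bigOmega (m * T) * (-1:ℤ) ^ P.card = 1 := by
      rw [← pow_add, hΩ, pow_mul]
      norm_num
    rw [← mul_assoc, ← mul_assoc, hsign, one_mul]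
    congr 1
    rw [hTdef]
    push_cast
    rfl
  · rw [if_neg hme]
    have hex : ∃ p ∈ P, e.factorization p < a p := by
      by_contra hc
      push_neg at hc
      refine hme ((Nat.factorization_le_iff_dvd hm he).mp (Finsupp.le_def.mpr fun q => ?_))
      by_cases hq : q ∈ P
      · exact hc q hq
      · have : m.factorization q = 0 := Finsupp.notMem_support_iff.mp (by rwa [Nat.support_factorization])
        simp [hadef] at this ⊢
        rw [this]
        exact Nat.zero_le _
    obtain ⟨p₀, hp₀P, hv₀⟩ := hex
    have hzero : (-(Nat.gcd (p₀ ^ a p₀) e : ℤ)) + (Nat.gcd (p₀ ^ (a p₀ - 1)) e : ℤ) = 0 := by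
      rw [gcd_pow_prime (hP p₀ hp₀P) _ he, gcd_pow_prime (hP p₀ hp₀P) _ he,
        min_eq_right hv₀.le, min_eq_right (Nat.le_sub_one_of_lt hv₀)]
      exact neg_add_cancel _
    rw [prod_eq_zero hp₀P hzero, mul_zero]

end Aux

section AuxA

open MulAction Finset Subgroup

variable {C S : Type*} [CommGroup C] [Fintype C] [Fintype S] [MulAction C S]

lemma pow_smul_eq_iff {g : C} (hg : ∀ x : C, x ∈ Subgroup.zpowers g) (x : S) (k : ℕ) :
    g ^ k • x = x ↔ Nat.card (orbit C x) ∣ k := by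
  have hgen : ∀ y : C ⧸ stabilizer C x, y ∈ Subgroup.zpowers ((g : C) : C ⧸ stabilizer C x) := by
    intro y
    obtain ⟨c, rfl⟩ := QuotientGroup.mk_surjective y
    obtain ⟨i, rfl⟩ := Subgroup.mem_zpowers_iff.mp (hg c)
    exact Subgroup.mem_zpowers_iff.mpr ⟨i, by rw [← QuotientGroup.mk_zpow]⟩
  have horder : orderOf ((g : C) : C ⧸ stabilizer C x) = Nat.card (orbit C x) := by
    rw [orderOf_eq_card_of_forall_mem_zpowers hgen, ← Subgroup.index_eq_card,
      MulAction.index_stabilizer, Nat.card_coe_set_eq]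
  rw [← horder]
  constructor
  · intro h
    apply orderOf_dvd_of_pow_eq_one
    rw [← QuotientGroup.mk_pow, QuotientGroup.eq_one_iff]
    exact mem_stabilizer_iff.mpr h
  · intro h
    have : ((g : C) : C ⧸ stabilizer C x) ^ k = 1 := orderOf_dvd_iff_pow_eq_one.mp h
    rw [← QuotientGroup.mk_pow, QuotientGroup.eq_one_iff] at this
    exact mem_stabilizer_iff.mp this

lemma card_orbit_powSubgroup {g : C} (hg : ∀ x : C, x ∈ Subgroup.zpowers g) (d : ℕ) (y : S) :
    Nat.card (orbit (powSubgroup C d) y)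
      = Nat.card (orbit C y) / Nat.gcd d (Nat.card (orbit C y)) := by
  set e := Nat.card (orbit C y) with hedef
  have hene : e ≠ 0 := by
    have : Nonempty (orbit C y) := Set.nonempty_coe_sort.mpr (nonempty_orbit y)
    exact Nat.card_pos.ne'
  have hG0 : 0 < Nat.gcd d e := Nat.gcd_pos_of_pos_right d (Nat.pos_of_ne_zero hene)
  set e' := e / Nat.gcd d e with he'def
  have he' : 0 < e' := Nat.div_pos (Nat.le_of_dvd (Nat.pos_of_ne_zero hene)
    (Nat.gcd_dvd_right d e)) hG0
  haveI : NeZero e' := ⟨he'.ne'⟩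
  have key : ∀ k : ℕ, e ∣ k * d ↔ e' ∣ k := by
    intro k
    have heG : e' * Nat.gcd d e = e := Nat.div_mul_cancel (Nat.gcd_dvd_right d e)
    have hdG : d / Nat.gcd d e * Nat.gcd d e = d := Nat.div_mul_cancel (Nat.gcd_dvd_left d e)
    constructor
    · intro h
      have h2 : e' * Nat.gcd d e ∣ k * (d / Nat.gcd d e) * Nat.gcd d e := by
        rw [heG, mul_assoc, hdG]; exact h
      have h3 : e' ∣ k * (d / Nat.gcd d e) :=
        (Nat.mul_dvd_mul_iff_right hG0).mp h2
      have hco : Nat.Coprime e' (d / Nat.gcd d e) := by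
        have h4 := Nat.coprime_div_gcd_div_gcd (m := e) (n := d)
          (by rw [Nat.gcd_comm]; exact hG0)
        rwa [Nat.gcd_comm e d] at h4
      exact hco.dvd_of_dvd_mul_right h3
    · rintro ⟨t, rfl⟩
      rw [← heG, mul_assoc, mul_comm t d]
      exact mul_dvd_mul_left e' ((Nat.gcd_dvd_left d e).mul_right t)
  have hperiod : ∀ (k : ℕ) (w : S), w ∈ orbit C y → (g ^ (k * d) • w = w ↔ e' ∣ k) := by
    intro k w hw
    obtain ⟨c, rfl⟩ := hw
    rw [pow_smul_eq_iff hg _ (k * d), MulAction.orbit_smul, ← hedef]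
    exact key k
  set χ : ZMod e' → S := fun z => g ^ (z.val * d) • y with hχ
  have hmain : ∀ z z' : ZMod e', z'.val ≤ z.val → χ z = χ z' → z = z' := by
    intro z z' hle h
    have h5 : g ^ ((z.val - z'.val) * d) • (g ^ (z'.val * d) • y) = g ^ (z'.val * d) • y := by
      rw [smul_smul, ← pow_add, ← add_mul, Nat.sub_add_cancel hle]
      exact h
    have hdvd : e' ∣ z.val - z'.val := (hperiod _ _ (mem_orbit y _)).mp h5
    have hz : z.val - z'.val = 0 :=
      Nat.eq_zero_of_dvd_of_lt hdvd (lt_of_le_of_lt (Nat.sub_le _ _) (ZMod.val_lt z)) |>.symm ▸ rfl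
    have hvv : z.val = z'.val := by omega
    exact ZMod.val_injective _ hvv
  have hinj : Function.Injective χ := by
    intro z z' h
    rcases le_total z'.val z.val with hle | hle
    · exact hmain z z' hle h
    · exact (hmain z' z hle h.symm).symm
  have hrange : orbit (powSubgroup C d) y = Set.range χ := by
    ext w
    constructor
    · rintro ⟨⟨u, hu⟩, rfl⟩
      obtain ⟨c, hc⟩ := id hu
      obtain ⟨k, hk⟩ := (Submonoid.mem_powers_iff _ _).mp (mem_powers_iff_mem_zpowers.mpr (hg c))
      have hcu : c ^ d = u := hc
      refine ⟨(k : ZMod e'), ?_⟩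
      have hsub : (k : ZMod e').val ≤ k := by rw [ZMod.val_natCast]; exact Nat.mod_le k e'
      have hdiff : e' ∣ k - (k : ZMod e').val := by
        rw [ZMod.val_natCast]; exact Nat.dvd_sub_mod k
      have hyw : (⟨u, hu⟩ : powSubgroup C d) • y = g ^ (k * d) • y := by
        show u • y = g ^ (k * d) • y
        rw [← hcu, ← hk, ← pow_mul]
      show χ ↑k = (⟨u, hu⟩ : powSubgroup C d) • y
      rw [hyw]
      show g ^ ((k : ZMod e').val * d) • y = g ^ (k * d) • y
      conv_rhs => rw [show k = (k - (k : ZMod e').val) + (k : ZMod e').val from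
        (Nat.sub_add_cancel hsub).symm]
      rw [add_mul, pow_add, mul_smul, (hperiod _ _ (mem_orbit y _)).mpr hdiff]
    · rintro ⟨z, rfl⟩
      refine ⟨⟨(g ^ z.val) ^ d, ⟨g ^ z.val, rfl⟩⟩, ?_⟩
      show (g ^ z.val) ^ d • y = g ^ (z.val * d) • y
      rw [← pow_mul]
  rw [hrange, Nat.card_range_of_injective hinj, Nat.card_zmod]

lemma nat_card_sigma {ι : Type*} [Fintype ι] (f : ι → Type*) [∀ i, Finite (f i)] :
    Nat.card (Σ i, f i) = ∑ i, Nat.card (f i) := by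
  letI : ∀ i, Fintype (f i) := fun i => Fintype.ofFinite _
  rw [Nat.card_eq_fintype_card, Fintype.card_sigma]
  exact Finset.sum_congr rfl fun i _ => (Nat.card_eq_fintype_card).symm

lemma card_quot_orbit {g : C} (hg : ∀ x : C, x ∈ Subgroup.zpowers g) (d : ℕ)
    (ω : orbitRel.Quotient C S) :
    Nat.card (orbitRel.Quotient (powSubgroup C d) ω.orbit)
      = Nat.gcd d (Nat.card ω.orbit) := by
  classical
  set e := Nat.card ω.orbit with hedef
  have horbX : ∀ a : ω.orbit, orbit C (a : S) = (ω.orbit : Set S) := by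
    intro a
    have h := a.2
    rw [orbitRel.Quotient.mem_orbit] at h
    conv_rhs => rw [← h]
    rw [orbitRel.Quotient.orbit_mk]
  have hcardo : ∀ a : ω.orbit, Nat.card (orbit C (a : S)) = e := by
    intro a
    rw [hedef]
    exact congrArg Nat.card (congrArg Set.Elem (horbX a))
  have hene : e ≠ 0 := by
    have : Nonempty ω.orbit := Set.nonempty_coe_sort.mpr (orbitRel.Quotient.nonempty_orbit ω)
    exact Nat.card_pos.ne'
  have hG0 : 0 < Nat.gcd d e := Nat.gcd_pos_of_pos_right d (Nat.pos_of_ne_zero hene)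
  have he' : 0 < e / Nat.gcd d e :=
    Nat.div_pos (Nat.le_of_dvd (Nat.pos_of_ne_zero hene) (Nat.gcd_dvd_right d e)) hG0
  have hfib : ∀ ξ : orbitRel.Quotient (powSubgroup C d) ω.orbit,
      Nat.card ξ.orbit = e / Nat.gcd d e := by
    intro ξ
    induction ξ using Quotient.inductionOn' with
    | h a =>
      rw [orbitRel.Quotient.orbit_mk a]
      have hEq : Nat.card (orbit (powSubgroup C d) a)
          = Nat.card (orbit (powSubgroup C d) (a : S)) := by
        refine Nat.card_congr (Equiv.ofBijective
          (fun b => ⟨((b : ω.orbit) : S), orbitRel.Quotient.mem_subgroup_orbit_iff.mpr b.2⟩)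
          ⟨?_, ?_⟩)
        · intro b b' hbb
          simp only [Subtype.mk_eq_mk] at hbb
          exact Subtype.ext (Subtype.ext hbb)
        · intro c
          obtain ⟨h, hh⟩ := c.2
          refine ⟨⟨h • a, mem_orbit a h⟩, ?_⟩
          apply Subtype.ext
          show ((h • a : ω.orbit) : S) = (c : S)
          rw [← hh]
          rfl
      rw [hEq, card_orbit_powSubgroup hg d (a : S), hcardo a]
  letI : Fintype (orbitRel.Quotient (powSubgroup C d) ω.orbit) := Fintype.ofFinite _
  have hsum : e = Nat.card (orbitRel.Quotient (powSubgroup C d) ω.orbit)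
      * (e / Nat.gcd d e) := by
    calc e = Nat.card (Σ ξ : orbitRel.Quotient (powSubgroup C d) ω.orbit, ξ.orbit) :=
          Nat.card_congr (selfEquivSigmaOrbits' (powSubgroup C d) ω.orbit)
      _ = ∑ ξ : orbitRel.Quotient (powSubgroup C d) ω.orbit, Nat.card ξ.orbit :=
          nat_card_sigma _
      _ = ∑ _ξ : orbitRel.Quotient (powSubgroup C d) ω.orbit, (e / Nat.gcd d e) :=
          Finset.sum_congr rfl fun ξ _ => hfib ξ
      _ = _ := by
          rw [Finset.sum_const, smul_eq_mul, Finset.card_univ, Nat.card_eq_fintype_card]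
  have h2 : Nat.gcd d e * (e / Nat.gcd d e) = e := Nat.mul_div_cancel' (Nat.gcd_dvd_right d e)
  exact Nat.eq_of_mul_eq_mul_right he' (hsum.symm.trans h2.symm)

lemma M_eq_sum [IsCyclic C] (d : ℕ) :
    numPowOrbits C S d
      = ∑ e ∈ (Fintype.card C).divisors, Nat.gcd d e * numOrbitsOfCard C S e := by
  classical
  obtain ⟨g, hg⟩ := IsCyclic.exists_generator (α := C)
  letI : Fintype (orbitRel.Quotient C S) := Fintype.ofFinite _
  have h1 : numPowOrbits C S d = ∑ ω : orbitRel.Quotient C S, Nat.gcd d (Nat.card ω.orbit) := by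
    unfold numPowOrbits
    rw [Nat.card_congr (MulAction.equivSubgroupOrbits S (powSubgroup C d)), nat_card_sigma]
    exact Finset.sum_congr rfl fun ω _ => card_quot_orbit hg d ω
  rw [h1]
  have hmaps : ∀ ω : orbitRel.Quotient C S, Nat.card ω.orbit ∈ (Fintype.card C).divisors := by
    intro ω
    rw [Nat.mem_divisors]
    constructor
    · rw [orbitRel.Quotient.orbit_eq_orbit_out ω Quotient.out_eq']
      have hidx : Nat.card (orbit C (Quotient.out ω)) = (stabilizer C (Quotient.out ω)).index :=
        (Nat.card_coe_set_eq _).trans (MulAction.index_stabilizer C _).symm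
      rw [hidx, ← Nat.card_eq_fintype_card]
      exact Subgroup.index_dvd_card _
    · exact Fintype.card_ne_zero
  rw [← Finset.sum_fiberwise_of_maps_to (g := fun ω : orbitRel.Quotient C S => Nat.card ω.orbit)
      (fun ω _ => hmaps ω) (fun ω => Nat.gcd d (Nat.card ω.orbit))]
  refine Finset.sum_congr rfl fun e _he => ?_
  have hconst : ∀ ω ∈ Finset.univ.filter (fun ω : orbitRel.Quotient C S => Nat.card ω.orbit = e),
      Nat.gcd d (Nat.card ω.orbit) = Nat.gcd d e := fun ω hω => by
    rw [(Finset.mem_filter.mp hω).2]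
  rw [Finset.sum_congr rfl hconst, Finset.sum_const, smul_eq_mul, mul_comm]
  congr 1
  unfold numOrbitsOfCard
  rw [Nat.card_eq_fintype_card, Fintype.card_subtype]

end AuxA

/-- Equation `max`: for `m ∣ n` and `T = m / rad m` (the maximal choice with
`m/T` squarefree), `∑_{T∣d∣m} (−1)^{Ω(m·d)} M_d = T · (∏_{q ∣ m/T prime} (q−1)) · ∑_{m∣d∣n} a_d`;
equivalently `N_m = ∑_{m∣d∣n} a_d`. -/
theorem alternating_sum_eq_card_mul_sum (C S : Type*) [CommGroup C] [IsCyclic C] [Fintype C]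
    [Fintype S] [MulAction C S] (n m T : ℕ) (hn : Fintype.card C = n) (hm : m ∣ n)
    (hT : T = m / rad m) :
    (∑ d ∈ m.divisors.filter (T ∣ ·), (-1 : ℤ) ^ bigOmega (m * d) * numPowOrbits C S d =
      (T : ℤ) * (∏ q ∈ (m / T).primeFactors, ((q : ℤ) - 1)) *
        ∑ d ∈ n.divisors.filter (m ∣ ·), (numOrbitsOfCard C S d : ℤ)) ∧
    Nfun C S m = ∑ d ∈ n.divisors.filter (m ∣ ·), (numOrbitsOfCard C S d : ℚ) := by
  classical
  have hn0 : n ≠ 0 := by rw [← hn]; exact Fintype.card_ne_zero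
  have hm0 : m ≠ 0 := by rintro rfl; exact hn0 (Nat.eq_zero_of_zero_dvd hm)
  have hradm : rad m ∣ m := Nat.prod_primeFactors_dvd m
  have hradpos : 0 < rad m :=
    Finset.prod_pos fun p hp => (Nat.prime_of_mem_primeFactors hp).pos
  have hT0 : T ≠ 0 := by
    rw [hT]
    exact (Nat.div_pos (Nat.le_of_dvd (Nat.pos_of_ne_zero hm0) hradm) hradpos).ne'
  have hmT : m / T = rad m := by rw [hT]; exact Nat.div_div_self hradm hm0
  have hPF : (m / T).primeFactors = m.primeFactors := by
    rw [hmT]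
    unfold rad
    exact Nat.primeFactors_prod fun p hp => Nat.prime_of_mem_primeFactors hp
  have key : ∀ e ∈ n.divisors,
      ∑ d ∈ m.divisors.filter (T ∣ ·), (-1 : ℤ) ^ bigOmega (m * d) * (Nat.gcd d e : ℤ)
        = if m ∣ e then (T : ℤ) * ∏ q ∈ m.primeFactors, ((q : ℤ) - 1) else 0 := by
    intro e he
    have := keyB hm0 (Nat.pos_of_mem_divisors he).ne'
    rwa [← hT] at this
  have hMd : ∀ d : ℕ, (numPowOrbits C S d : ℤ)
      = ∑ e ∈ n.divisors, (Nat.gcd d e : ℤ) * (numOrbitsOfCard C S e : ℤ) := by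
    intro d
    rw [M_eq_sum d, hn]
    push_cast
    rfl
  have hmain : ∑ d ∈ m.divisors.filter (T ∣ ·),
        (-1 : ℤ) ^ bigOmega (m * d) * (numPowOrbits C S d : ℤ) =
      (T : ℤ) * (∏ q ∈ (m / T).primeFactors, ((q : ℤ) - 1)) *
        ∑ d ∈ n.divisors.filter (m ∣ ·), (numOrbitsOfCard C S d : ℤ) := by
    calc ∑ d ∈ m.divisors.filter (T ∣ ·), (-1 : ℤ) ^ bigOmega (m * d) * (numPowOrbits C S d : ℤ)
        = ∑ d ∈ m.divisors.filter (T ∣ ·), ∑ e ∈ n.divisors,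
            ((-1 : ℤ) ^ bigOmega (m * d) * (Nat.gcd d e : ℤ)) * (numOrbitsOfCard C S e : ℤ) := by
          refine Finset.sum_congr rfl fun d _ => ?_
          rw [hMd d, Finset.mul_sum]
          exact Finset.sum_congr rfl fun e _ => by ring
      _ = ∑ e ∈ n.divisors, ∑ d ∈ m.divisors.filter (T ∣ ·),
            ((-1 : ℤ) ^ bigOmega (m * d) * (Nat.gcd d e : ℤ)) * (numOrbitsOfCard C S e : ℤ) :=
          Finset.sum_comm
      _ = ∑ e ∈ n.divisors,
            (if m ∣ e then (T : ℤ) * ∏ q ∈ m.primeFactors, ((q : ℤ) - 1) else 0)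
              * (numOrbitsOfCard C S e : ℤ) := by
          refine Finset.sum_congr rfl fun e he => ?_
          rw [← Finset.sum_mul, key e he]
      _ = ∑ e ∈ n.divisors, (if m ∣ e then
            ((T : ℤ) * ∏ q ∈ m.primeFactors, ((q : ℤ) - 1)) * (numOrbitsOfCard C S e : ℤ)
            else 0) := by
          refine Finset.sum_congr rfl fun e _ => ?_
          rw [ite_mul, zero_mul]
      _ = ∑ e ∈ n.divisors.filter (m ∣ ·),
            ((T : ℤ) * ∏ q ∈ m.primeFactors, ((q : ℤ) - 1)) * (numOrbitsOfCard C S e : ℤ) :=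
          (Finset.sum_filter _ _).symm
      _ = (T : ℤ) * (∏ q ∈ (m / T).primeFactors, ((q : ℤ) - 1)) *
            ∑ d ∈ n.divisors.filter (m ∣ ·), (numOrbitsOfCard C S d : ℤ) := by
          rw [Finset.mul_sum, hPF]
  refine ⟨hmain, ?_⟩
  -- the rational statement
  unfold Nfun
  rw [← hT]
  have hTQ : ((m : ℚ) / (rad m : ℚ)) = (T : ℚ) := by
    rw [hT]
    exact (Nat.cast_div hradm (by exact_mod_cast hradpos.ne')).symm
  have hsumQ : (∑ d ∈ m.divisors.filter (T ∣ ·),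
        (-1 : ℚ) ^ bigOmega (m * d) * (numPowOrbits C S d : ℚ))
      = ((∑ d ∈ m.divisors.filter (T ∣ ·),
          (-1 : ℤ) ^ bigOmega (m * d) * (numPowOrbits C S d : ℤ) : ℤ) : ℚ) := by
    push_cast
    rfl
  rw [hTQ, hsumQ, hmain]
  have hprod0 : (∏ q ∈ (m / T).primeFactors, ((q : ℚ) - 1)) ≠ 0 := by
    refine Finset.prod_ne_zero_iff.mpr fun q hq => ?_
    have h2 : 2 ≤ q := (Nat.prime_of_mem_primeFactors hq).two_le
    have h2q : (2 : ℚ) ≤ (q : ℚ) := by exact_mod_cast h2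
    have : (1 : ℚ) < (q : ℚ) := by linarith
    exact sub_ne_zero.mpr this.ne'
  have hTQ0 : (T : ℚ) ≠ 0 := by exact_mod_cast hT0
  push_cast
  rw [div_eq_iff hprod0]
  field_simp
end

section
/- Let G be a finite group and let G₁, G₂ be subgroups of G. Then G₁ and G₂ are almost conjugate in G if and only if for every cyclic subgroup C of G, the double coset spaces C\G/G₁ and C\G/G₂ have the same cardinality. -/
open MulAction

namespace AlmostConjAux

variable {G : Type*} [Group G] [Finite G]

/-- Number of fixed points of `c` on `G ⧸ H`. -/
noncomputable def Fx (H : Subgroup G) (c : G) : ℕ := Nat.card (fixedBy (G ⧸ H) c)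

/-- Size of the intersection of the conjugacy class of `c` with `H`. -/
noncomputable def Ax (H : Subgroup G) (c : G) : ℕ := Nat.card {x : G // IsConj c x ∧ x ∈ H}

lemma mem_fixed_iff (H : Subgroup G) (c g : G) :
    (QuotientGroup.mk g : G ⧸ H) ∈ fixedBy (G ⧸ H) c ↔ g⁻¹ * c * g ∈ H := by
  have h0 : (QuotientGroup.mk g : G ⧸ H) ∈ fixedBy (G ⧸ H) c ↔
      (QuotientGroup.mk (c * g) : G ⧸ H) = QuotientGroup.mk g := Iff.rfl
  rw [h0, QuotientGroup.eq, show (c * g)⁻¹ * g = (g⁻¹ * c * g)⁻¹ by group, Subgroup.inv_mem_iff]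

lemma key_count (H : Subgroup G) (c : G) :
    Fx H c * Nat.card H = Ax H c * Nat.card (Subgroup.centralizer ({c} : Set G)) := by
  classical
  set S : Set (G ⧸ H) := fixedBy (G ⧸ H) c with hS
  set T := {g : G // g⁻¹ * c * g ∈ H} with hT
  have e1 : T ≃ (QuotientGroup.mk ⁻¹' S : Set G) :=
    Equiv.subtypeEquivRight (fun g => ((mem_fixed_iff H c g)).symm)
  have h1 : Nat.card T = Fx H c * Nat.card H := by
    rw [Nat.card_congr e1,
      Nat.card_congr (QuotientGroup.preimageMkEquivSubgroupProdSet H S), Nat.card_prod,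
      mul_comm]
    rfl
  -- second count
  let f : T → {x : G // IsConj c x ∧ x ∈ H} := fun g =>
    ⟨(g : G)⁻¹ * c * g, isConj_iff.mpr ⟨(g : G)⁻¹, by group⟩, g.2⟩
  have h2 : ∀ x : {x : G // IsConj c x ∧ x ∈ H},
      Nat.card {t : T // f t = x} = Nat.card (Subgroup.centralizer ({c} : Set G)) := by
    rintro ⟨xv, hconj, hmem⟩
    obtain ⟨u, hu⟩ := isConj_iff.mp hconj
    -- w⁻¹ * c * w = xv with w := u⁻¹
    set w : G := u⁻¹ with hw
    have hwx : w⁻¹ * c * w = xv := by rw [hw]; simpa using hu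
    refine Nat.card_congr ?_
    refine ⟨fun t => ⟨(t.1 : G) * w⁻¹, ?_⟩, fun z => ⟨⟨(z : G) * w, ?_⟩, ?_⟩, ?_, ?_⟩
    · -- membership in centralizer
      rw [Subgroup.mem_centralizer_iff]
      rintro y hy
      rcases hy with rfl
      have ht : (t.1 : G)⁻¹ * y * t.1 = xv := by
        have := t.2
        simpa [f, Subtype.ext_iff] using this
      have : (t.1 : G)⁻¹ * y * t.1 = w⁻¹ * y * w := by rw [ht, hwx]
      calc y * ((t.1 : G) * w⁻¹) = (t.1 : G) * ((t.1 : G)⁻¹ * y * t.1) * w⁻¹ := by group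
        _ = (t.1 : G) * (w⁻¹ * y * w) * w⁻¹ := by rw [this]
        _ = (t.1 : G) * w⁻¹ * y := by group
    · -- z * w lands in T
      have hz : c * (z : G) = (z : G) * c := Subgroup.mem_centralizer_iff.mp z.2 c rfl
      have : ((z : G) * w)⁻¹ * c * ((z : G) * w) = xv := by
        calc ((z : G) * w)⁻¹ * c * ((z : G) * w) = w⁻¹ * ((z : G)⁻¹ * (c * (z : G))) * w := by
              group
          _ = w⁻¹ * ((z : G)⁻¹ * ((z : G) * c)) * w := by rw [hz]
          _ = w⁻¹ * c * w := by group
          _ = xv := hwx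
      rw [this]; exact hmem
    · -- fiber condition
      have hz : c * (z : G) = (z : G) * c := Subgroup.mem_centralizer_iff.mp z.2 c rfl
      apply Subtype.ext
      show ((z : G) * w)⁻¹ * c * ((z : G) * w) = xv
      calc ((z : G) * w)⁻¹ * c * ((z : G) * w) = w⁻¹ * ((z : G)⁻¹ * (c * (z : G))) * w := by
            group
        _ = w⁻¹ * ((z : G)⁻¹ * ((z : G) * c)) * w := by rw [hz]
        _ = w⁻¹ * c * w := by group
        _ = xv := hwx
    · rintro ⟨⟨g, hg⟩, hfg⟩
      apply Subtype.ext; apply Subtype.ext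
      show g * w⁻¹ * w = g
      group
    · rintro ⟨z, hz⟩
      apply Subtype.ext
      show z * w * w⁻¹ = z
      group
  have h3 : Nat.card T = Ax H c * Nat.card (Subgroup.centralizer ({c} : Set G)) := by
    letI : Fintype {x : G // IsConj c x ∧ x ∈ H} := Fintype.ofFinite _
    letI : Fintype T := Fintype.ofFinite _
    letI : ∀ x : {x : G // IsConj c x ∧ x ∈ H}, Fintype {t : T // f t = x} :=
      fun x => Fintype.ofFinite _
    have := Nat.card_congr (Equiv.sigmaFiberEquiv f).symm
    rw [this, Nat.card_eq_fintype_card, Fintype.card_sigma]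
    rw [Ax, Nat.card_eq_fintype_card]
    rw [Finset.sum_congr rfl (fun x _ => by rw [← Nat.card_eq_fintype_card, h2 x])]
    rw [Finset.sum_const, Finset.card_univ, smul_eq_mul]
  rw [← h1, h3]

/-- The double coset space `C \ G / H` is in bijection with the orbits of `C` on `G ⧸ H`. -/
noncomputable def dosetEquivOrbits (C H : Subgroup G) :
    DoubleCoset.Quotient (C : Set G) (H : Set G) ≃ orbitRel.Quotient C (G ⧸ H) := by
  refine Equiv.ofBijective
    (Quotient.lift (fun g => (⟦(QuotientGroup.mk g : G ⧸ H)⟧ : orbitRel.Quotient C (G ⧸ H)))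
      ?_) ⟨?_, ?_⟩
  · intro a b hab
    have hab' : ∃ p ∈ C, ∃ q ∈ H, b = p * a * q := DoubleCoset.rel_iff.mp hab
    obtain ⟨p, hp, q, hq, rfl⟩ := hab'
    refine Quotient.sound (orbitRel_apply.mpr (mem_orbit_iff.mpr ⟨⟨p⁻¹, C.inv_mem hp⟩, ?_⟩))
    show (QuotientGroup.mk (p⁻¹ * (p * a * q)) : G ⧸ H) = QuotientGroup.mk a
    rw [QuotientGroup.eq]
    convert H.inv_mem hq using 1
    group
  · -- injective
    intro x y
    induction x using Quotient.ind with
    | _ a =>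
    induction y using Quotient.ind with
    | _ b =>
    intro hxy
    have h := Quotient.exact hxy
    have h2 : (QuotientGroup.mk a : G ⧸ H) ∈ orbit C (QuotientGroup.mk b : G ⧸ H) :=
      orbitRel_apply.mp h
    obtain ⟨⟨p, hp⟩, hx⟩ := mem_orbit_iff.mp h2
    have hx' : (QuotientGroup.mk (p * b) : G ⧸ H) = QuotientGroup.mk a := hx
    rw [QuotientGroup.eq] at hx'
    apply Quotient.sound
    show DoubleCoset.setoid (C : Set G) (H : Set G) a b
    rw [show (DoubleCoset.setoid (C : Set G) (H : Set G) a b) ↔ _ from DoubleCoset.rel_iff]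
    refine ⟨p⁻¹, C.inv_mem hp, ((p * b)⁻¹ * a)⁻¹, H.inv_mem hx', ?_⟩
    group
  · -- surjective
    intro x
    induction x using Quotient.ind with
    | _ q =>
    induction q using QuotientGroup.induction_on with
    | _ g => exact ⟨Quotient.mk _ g, rfl⟩

lemma burnside (C H : Subgroup G) [Fintype C] :
    ∑ c : C, Fx H (c : G) =
      Nat.card (DoubleCoset.Quotient (C : Set G) (H : Set G)) * Nat.card C := by
  classical
  letI : Fintype (G ⧸ H) := Fintype.ofFinite _
  letI : Fintype (orbitRel.Quotient C (G ⧸ H)) := Fintype.ofFinite _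
  have hb := MulAction.sum_card_fixedBy_eq_card_orbits_mul_card_group C (G ⧸ H)
  have h1 : ∑ c : C, Fx H (c : G) = ∑ a : C, Fintype.card (fixedBy (G ⧸ H) a) := by
    refine Finset.sum_congr rfl fun a _ => ?_
    rw [Fx, Nat.card_eq_fintype_card]
    rfl
  rw [h1, hb, Nat.card_congr (dosetEquivOrbits C H), Nat.card_eq_fintype_card,
    Nat.card_eq_fintype_card]

lemma full_sum (H : Subgroup G) [Fintype G] : ∑ c : G, Fx H c = Nat.card G := by
  classical
  letI : Fintype (G ⧸ H) := Fintype.ofFinite _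
  letI : Fintype (orbitRel.Quotient G (G ⧸ H)) := Fintype.ofFinite _
  have hb := MulAction.sum_card_fixedBy_eq_card_orbits_mul_card_group G (G ⧸ H)
  have hsub : Subsingleton (orbitRel.Quotient G (G ⧸ H)) :=
    (pretransitive_iff_subsingleton_quotient G (G ⧸ H)).mp inferInstance
  have hone : Fintype.card (orbitRel.Quotient G (G ⧸ H)) = 1 :=
    Fintype.card_eq_one_iff.mpr ⟨⟦(QuotientGroup.mk 1 : G ⧸ H)⟧,
      fun y => Subsingleton.elim y _⟩
  have h1 : ∑ c : G, Fx H c = ∑ a : G, Fintype.card (fixedBy (G ⧸ H) a) :=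
    Finset.sum_congr rfl fun a _ => by rw [Fx, Nat.card_eq_fintype_card]
  rw [h1, hb, hone, one_mul, Nat.card_eq_fintype_card]

lemma Fx_eq_of_zpowers_eq {x y : G} (h : Subgroup.zpowers x = Subgroup.zpowers y)
    (H : Subgroup G) : Fx H x = Fx H y := by
  have key : ∀ a b : G, a ∈ Subgroup.zpowers b →
      fixedBy (G ⧸ H) b ⊆ fixedBy (G ⧸ H) a := by
    intro a b hab q hq
    have h1 : Subgroup.zpowers b ≤ stabilizer G q :=
      Subgroup.zpowers_le.mpr (mem_stabilizer_iff.mpr (mem_fixedBy.mp hq))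
    exact mem_fixedBy.mpr (mem_stabilizer_iff.mp (h1 hab))
  have hx : x ∈ Subgroup.zpowers y := h ▸ Subgroup.mem_zpowers x
  have hy : y ∈ Subgroup.zpowers x := h ▸ Subgroup.mem_zpowers y
  unfold Fx
  rw [Set.Subset.antisymm (key y x hy) (key x y hx)]

lemma Fx_eq_of_doset (G₁ G₂ : Subgroup G)
    (h : ∀ C : Subgroup G, IsCyclic C →
        Nat.card (DoubleCoset.Quotient (C : Set G) (G₁ : Set G)) =
          Nat.card (DoubleCoset.Quotient (C : Set G) (G₂ : Set G))) :
    ∀ c : G, Fx G₁ c = Fx G₂ c := by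
  classical
  have main : ∀ n : ℕ, ∀ c : G, orderOf c = n → Fx G₁ c = Fx G₂ c := by
    intro n
    induction n using Nat.strong_induction_on with
    | _ n ih =>
      intro c hc
      set C := Subgroup.zpowers c with hC
      letI : Fintype C := Fintype.ofFinite _
      have hcyc : IsCyclic C := ⟨⟨⟨c, Subgroup.mem_zpowers c⟩, fun x => by
        obtain ⟨k, hk⟩ := x.2
        exact ⟨k, Subtype.ext (by simpa using hk)⟩⟩⟩
      have hsum : ∑ x : C, Fx G₁ (x : G) = ∑ x : C, Fx G₂ (x : G) := by
        rw [burnside C G₁, burnside C G₂, h C hcyc]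
      have hsplit : ∀ H : Subgroup G,
          ∑ x : C, Fx H (x : G) =
            (Finset.univ.filter (fun x : C => orderOf (x : G) = orderOf c)).card * Fx H c +
            ∑ x ∈ Finset.univ.filter (fun x : C => ¬ orderOf (x : G) = orderOf c),
              Fx H (x : G) := by
        intro H
        rw [← Finset.sum_filter_add_sum_filter_not Finset.univ
          (fun x : C => orderOf (x : G) = orderOf c) (fun x => Fx H (x : G))]
        congr 1
        rw [Finset.sum_congr rfl (fun x hx => ?_), Finset.sum_const, smul_eq_mul]
        have hxord : orderOf (x : G) = orderOf c := (Finset.mem_filter.mp hx).2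
        have hle : Subgroup.zpowers (x : G) ≤ Subgroup.zpowers c :=
          Subgroup.zpowers_le.mpr x.2
        have hzp : Subgroup.zpowers (x : G) = Subgroup.zpowers c := by
          refine Subgroup.eq_of_le_of_card_ge hle ?_
          rw [Nat.card_zpowers, Nat.card_zpowers, hxord]
        exact Fx_eq_of_zpowers_eq hzp H
      have hrest : ∑ x ∈ Finset.univ.filter (fun x : C => ¬ orderOf (x : G) = orderOf c),
            Fx G₁ (x : G) =
          ∑ x ∈ Finset.univ.filter (fun x : C => ¬ orderOf (x : G) = orderOf c),
            Fx G₂ (x : G) := by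
        refine Finset.sum_congr rfl fun x hx => ?_
        have hne : ¬ orderOf (x : G) = orderOf c := (Finset.mem_filter.mp hx).2
        have hdvd : orderOf (x : G) ∣ orderOf c := orderOf_dvd_of_mem_zpowers x.2
        have hpos : 0 < orderOf c := orderOf_pos c
        have hlt : orderOf (x : G) < n := by
          rw [← hc]
          exact lt_of_le_of_ne (Nat.le_of_dvd hpos hdvd) hne
        exact ih _ hlt _ rfl
      rw [hsplit G₁, hsplit G₂, hrest] at hsum
      have hkpos : 0 < (Finset.univ.filter (fun x : C => orderOf (x : G) = orderOf c)).card := by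
        refine Finset.card_pos.mpr ⟨⟨c, Subgroup.mem_zpowers c⟩, ?_⟩
        exact Finset.mem_filter.mpr ⟨Finset.mem_univ _, rfl⟩
      have := Nat.add_right_cancel hsum
      exact Nat.eq_of_mul_eq_mul_left hkpos this
  intro c
  exact main (orderOf c) c rfl

end AlmostConjAux

open AlmostConjAux

/-- Subgroups `G₁`, `G₂` of `G` are almost conjugate if every conjugacy class of `G`
meets them in sets of equal cardinality. -/
def AlmostConjugate {G : Type*} [Group G] (G₁ G₂ : Subgroup G) : Prop :=
  ∀ g : G, Nat.card {x : G // IsConj g x ∧ x ∈ G₁} = Nat.card {x : G // IsConj g x ∧ x ∈ G₂}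

/-- subgroups `G₁` and `G₂` of a finite group `G` are almost conjugate if and
only if for every cyclic subgroup `C` of `G` the double coset spaces `C\G/G₁` and `C\G/G₂`
have the same cardinality. -/
theorem almostConjugate_iff_doset_card (G : Type*) [Group G] [Finite G]
    (G₁ G₂ : Subgroup G) :
    AlmostConjugate G₁ G₂ ↔
      ∀ C : Subgroup G, IsCyclic C →
        Nat.card (DoubleCoset.Quotient (C : Set G) (G₁ : Set G)) =
          Nat.card (DoubleCoset.Quotient (C : Set G) (G₂ : Set G)) := by
  constructor
  · intro hAC C _
    classical
    letI : Fintype G := Fintype.ofFinite G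
    letI : Fintype C := Fintype.ofFinite _
    have hAx : ∀ c : G, Ax G₁ c = Ax G₂ c := hAC
    have hcard : Nat.card G₁ = Nat.card G₂ := by
      have e1 : (∑ c : G, Fx G₁ c) * Nat.card G₁ = (∑ c : G, Fx G₂ c) * Nat.card G₂ := by
        rw [Finset.sum_mul, Finset.sum_mul]
        refine Finset.sum_congr rfl fun c _ => ?_
        rw [key_count, key_count, hAx]
      rw [full_sum, full_sum] at e1
      exact Nat.eq_of_mul_eq_mul_left Nat.card_pos e1
    have e2 : Nat.card (DoubleCoset.Quotient (C : Set G) (G₁ : Set G)) * Nat.card C *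
        Nat.card G₁ =
        Nat.card (DoubleCoset.Quotient (C : Set G) (G₂ : Set G)) * Nat.card C * Nat.card G₂ := by
      rw [← burnside C G₁, ← burnside C G₂, Finset.sum_mul, Finset.sum_mul]
      refine Finset.sum_congr rfl fun c _ => ?_
      rw [key_count, key_count, hAx]
    rw [hcard] at e2
    have e3 := Nat.eq_of_mul_eq_mul_right (Nat.card_pos (α := G₂)) e2
    exact Nat.eq_of_mul_eq_mul_right (Nat.card_pos (α := C)) e3
  · intro h g
    classical
    have hbotcyc : IsCyclic (⊥ : Subgroup G) := isCyclic_of_subsingleton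
    have hq : Nat.card (G ⧸ G₁) = Nat.card (G ⧸ G₂) := by
      have hb := h ⊥ hbotcyc
      rwa [DoubleCoset.left_bot_eq_left_quot, DoubleCoset.left_bot_eq_left_quot] at hb
    have hcard : Nat.card G₁ = Nat.card G₂ := by
      have h1 := Subgroup.card_eq_card_quotient_mul_card_subgroup G₁
      have h2 := Subgroup.card_eq_card_quotient_mul_card_subgroup G₂
      rw [h1, hq] at h2
      exact Nat.eq_of_mul_eq_mul_left (Nat.card_pos (α := G ⧸ G₂)) h2
    have hF := Fx_eq_of_doset G₁ G₂ h
    have k1 := key_count G₁ g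
    have k2 := key_count G₂ g
    have : Ax G₁ g * Nat.card (Subgroup.centralizer ({g} : Set G)) =
        Ax G₂ g * Nat.card (Subgroup.centralizer ({g} : Set G)) := by
      rw [← k1, ← k2, hF g, hcard]
    exact Nat.eq_of_mul_eq_mul_right
      (Nat.card_pos (α := Subgroup.centralizer ({g} : Set G))) this
end

section
/- Let F = ℚ(∛2) (the field obtained by adjoining to ℚ the real cube root of 2) and let K be the splitting field of X³ − 2 over ℚ, which is the Galois closure of F over ℚ. Then S_F(2) = {1}, S_K(2) = {2}, and in particular lcm(S_F(2)) = 1 ≠ 2 = lcm(S_K(2)). Consequently, F and K are number fields with the same Galois closure over ℚ whose splitting-type lcm's differ at the prime 2. -/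
open NumberField

/-- The splitting type `S_F(p)`: the multiset of residual degrees of the primes of `𝓞 F`
lying above `p`. -/
noncomputable def splittingType (F : Type*) [Field F] [NumberField F] (p : ℕ) : Multiset ℕ :=
  letI := Classical.decEq (Ideal (𝓞 F))
  (UniqueFactorizationMonoid.normalizedFactors (Ideal.span {(p : 𝓞 F)})).dedup.map
    fun P => Ideal.inertiaDeg' (Ideal.span {(p : ℤ)}) P

section Aux

open Ideal Polynomial UniqueFactorizationMonoid

/-- There is no rational cube root of 2. -/
lemma rat_cube_ne_two (b : ℚ) : b ^ 3 ≠ 2 := by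
  intro h
  have hb : IsIntegral ℤ b := by
    refine ⟨X ^ 3 - C 2, monic_X_pow_sub_C _ (by norm_num), ?_⟩
    simp [h]
  obtain ⟨y, hy⟩ := IsIntegrallyClosed.isIntegral_iff.mp hb
  rw [← hy, eq_intCast] at h
  have hy3 : y ^ 3 = 2 := by exact_mod_cast h
  have h2 : y ∣ 2 := ⟨y ^ 2, by linear_combination -hy3⟩
  have hdvd : y.natAbs ∣ 2 := by
    have := Int.natAbs_dvd_natAbs.mpr h2
    simpa using this
  have hle2 : y.natAbs ≤ 2 := Nat.le_of_dvd (by norm_num) hdvd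
  have hl : -2 ≤ y := by omega
  have hr : y ≤ 2 := by omega
  interval_cases y <;> norm_num at hy3

/-- `X ^ 3 - 2` is irreducible over `ℚ`. -/
lemma irr_X_pow_three_sub_two : Irreducible (X ^ 3 - 2 : ℚ[X]) := by
  have h := X_pow_sub_C_irreducible_of_prime (K := ℚ) Nat.prime_three
    (a := 2) (fun b => rat_cube_ne_two b)
  rwa [map_ofNat C 2] at h

lemma monic_X_pow_three_sub_two : (X ^ 3 - 2 : ℚ[X]).Monic := by
  rw [← map_ofNat (C : ℚ →+* ℚ[X]) 2]
  exact monic_X_pow_sub_C _ (by norm_num)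

lemma natDegree_X_pow_three_sub_two : (X ^ 3 - 2 : ℚ[X]).natDegree = 3 := by
  rw [← map_ofNat (C : ℚ →+* ℚ[X]) 2]
  exact natDegree_X_pow_sub_C

/-- The ideal norm of the ideal generated by a natural number. -/
lemma absNorm_span_natCast (L : Type*) [Field L] [NumberField L] (n : ℕ) :
    Ideal.absNorm (Ideal.span {(n : 𝓞 L)}) = n ^ Module.finrank ℚ L := by
  rw [Ideal.absNorm_span_singleton,
    show ((n : 𝓞 L)) = algebraMap ℤ (𝓞 L) (n : ℤ) by rw [map_natCast],
    Algebra.norm_algebraMap_of_basis (NumberField.RingOfIntegers.basis L),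
    ← Module.finrank_eq_card_basis (NumberField.RingOfIntegers.basis L),
    ← NumberField.RingOfIntegers.rank L, Int.natAbs_pow]
  norm_num

set_option synthInstance.maxHeartbeats 1000000 in
/-- The norm of a prime above `p` is `p ^ f` where `f` is the inertia degree. -/
lemma absNorm_eq_pow_inertiaDeg {L : Type*} [Field L] [NumberField L] {p : ℕ} (hp : p.Prime)
    (P : Ideal (𝓞 L)) [hPp : P.IsPrime] (hPne : P ≠ ⊤) (hmem : (p : 𝓞 L) ∈ P) :
    Ideal.absNorm P = p ^ Ideal.inertiaDeg' (Ideal.span {(p : ℤ)}) P := by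
  set q : Ideal ℤ := Ideal.span {(p : ℤ)} with hq_def
  haveI hq : q.IsMaximal :=
    PrincipalIdealRing.isMaximal_of_irreducible
      ((Nat.prime_iff_prime_int.mp hp).irreducible)
  have hle : q ≤ P.comap (algebraMap ℤ (𝓞 L)) := by
    rw [hq_def, Ideal.span_le, Set.singleton_subset_iff]
    show algebraMap ℤ (𝓞 L) (p : ℤ) ∈ P
    rwa [map_natCast]
  have hcom : P.comap (algebraMap ℤ (𝓞 L)) = q := by
    refine (hq.eq_of_le ?_ hle).symm
    exact fun h => hPne (Ideal.comap_eq_top_iff.mp h)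
  haveI : P.LiesOver q := ⟨hcom.symm⟩
  have hPbot : P ≠ ⊥ := by
    intro h
    have : (p : 𝓞 L) = 0 := by simpa [h] using hmem
    exact hp.ne_zero (by exact_mod_cast this)
  haveI : Finite (𝓞 L ⧸ P) := by
    rw [← Ideal.absNorm_ne_zero_iff]
    rw [Ne, Ideal.absNorm_eq_zero_iff]
    exact hPbot
  haveI : NeZero p := ⟨hp.ne_zero⟩
  haveI : Finite (ℤ ⧸ q) := Finite.of_equiv _ (Int.quotientSpanNatEquivZMod p).symm.toEquiv
  letI := Fintype.ofFinite (𝓞 L ⧸ P)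
  letI := Fintype.ofFinite (ℤ ⧸ q)
  letI : Field (ℤ ⧸ q) := Ideal.Quotient.field q
  rw [Ideal.inertiaDeg'_algebraMap]
  rw [Ideal.absNorm_apply, Submodule.cardQuot_apply, Nat.card_eq_fintype_card]
  have hcardq : Fintype.card (ℤ ⧸ q) = p := by
    rw [← Nat.card_eq_fintype_card, Nat.card_congr (Int.quotientSpanNatEquivZMod p).toEquiv,
      Nat.card_zmod]
  rw [Module.card_eq_pow_finrank (K := ℤ ⧸ q) (V := 𝓞 L ⧸ P), hcardq]

set_option synthInstance.maxHeartbeats 1000000 in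
set_option maxHeartbeats 1000000 in
/-- If `p = x ^ e` with `span {x}` prime of norm `p ^ f`, the splitting type at `p` is `{f}`. -/
lemma splittingType_eq_singleton {L : Type*} [Field L] [NumberField L] {p e f : ℕ}
    (hp : p.Prime) (x : 𝓞 L) (he : e ≠ 0) (hx : x ^ e = (p : 𝓞 L))
    (hprime : Prime (Ideal.span {x}))
    (hnorm : Ideal.absNorm (Ideal.span {x}) = p ^ f) :
    splittingType L p = {f} := by
  classical
  have hmain : Ideal.span {(p : 𝓞 L)} = Ideal.span {x} ^ e := by
    rw [Ideal.span_singleton_pow, hx]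
  have hPne : Ideal.span {x} ≠ ⊤ := by
    intro h
    exact hprime.not_isUnit (by rw [Ideal.isUnit_iff]; exact h)
  haveI : (Ideal.span {x}).IsPrime := Ideal.isPrime_of_prime hprime
  have hmem : (p : 𝓞 L) ∈ Ideal.span {x} := by
    rw [← hx]
    exact Ideal.mem_span_singleton.mpr (dvd_pow_self x he)
  have habs := absNorm_eq_pow_inertiaDeg hp (Ideal.span {x}) hPne hmem
  rw [hnorm] at habs
  have hd : Ideal.inertiaDeg' (Ideal.span {(p : ℤ)}) (Ideal.span {x}) = f :=
    (Nat.pow_right_injective hp.two_le habs).symm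
  unfold splittingType
  rw [hmain, normalizedFactors_pow, normalizedFactors_irreducible hprime.irreducible,
    normalize_eq, Multiset.dedup_nsmul he, Multiset.dedup_singleton, Multiset.map_singleton, hd]

set_option synthInstance.maxHeartbeats 1000000 in
set_option maxHeartbeats 1000000 in
/-- In a number field containing a primitive cube root of unity, every prime above 2 has
norm `2 ^ d` with `d ≥ 2`. -/
lemma four_le_absNorm {L : Type*} [Field L] [NumberField L] (P : Ideal (𝓞 L))
    (hP : Prime P) (hmem : ((2 : ℕ) : 𝓞 L) ∈ P) (z : 𝓞 L) (hz : z ^ 2 + z + 1 = 0) :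
    ∃ d, 2 ≤ d ∧ Ideal.absNorm P = 2 ^ d := by
  classical
  haveI : P.IsPrime := Ideal.isPrime_of_prime hP
  have hPne : P ≠ ⊤ := by
    intro h
    exact hP.not_isUnit (by rw [Ideal.isUnit_iff]; exact h)
  have habs := absNorm_eq_pow_inertiaDeg Nat.prime_two P hPne hmem
  set d := Ideal.inertiaDeg' (Ideal.span {((2:ℕ) : ℤ)}) P with hd_def
  refine ⟨d, ?_, habs⟩
  haveI : Finite (𝓞 L ⧸ P) := by
    rw [← Ideal.absNorm_ne_zero_iff, habs]
    positivity
  haveI : Nontrivial (𝓞 L ⧸ P) := Ideal.Quotient.nontrivial_iff.mpr hPne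
  set w : 𝓞 L ⧸ P := Ideal.Quotient.mk P z with hw_def
  have hwq : w ^ 2 + w + 1 = 0 := by
    rw [hw_def, ← map_pow, ← map_add, ← map_one (Ideal.Quotient.mk P), ← map_add, hz, map_zero]
  have h2R : ((2 : ℕ) : 𝓞 L ⧸ P) = 0 := by
    rw [show (((2:ℕ)) : 𝓞 L ⧸ P) = Ideal.Quotient.mk P ((2:ℕ) : 𝓞 L) by rw [map_natCast]]
    exact Ideal.Quotient.eq_zero_iff_mem.mpr hmem
  have hw0 : w ≠ 0 := by
    intro h
    rw [h] at hwq
    have h1 : (1 : 𝓞 L ⧸ P) = 0 := by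
      calc (1 : 𝓞 L ⧸ P) = 0 ^ 2 + 0 + 1 := by ring
      _ = 0 := hwq
    exact one_ne_zero h1
  have h2' : (2 : 𝓞 L ⧸ P) = 0 := by
    have h := h2R
    rwa [Nat.cast_ofNat] at h
  have hw1 : w ≠ 1 := by
    intro h
    rw [h] at hwq
    have h1 : (1 : 𝓞 L ⧸ P) = 0 := by
      calc (1 : 𝓞 L ⧸ P) = (1 ^ 2 + 1 + 1) - 2 := by ring
      _ = 0 - 2 := by rw [hwq]
      _ = 0 - 0 := by rw [h2']
      _ = 0 := by ring
    exact one_ne_zero h1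
  -- the quotient has at least 3 elements
  letI := Fintype.ofFinite (𝓞 L ⧸ P)
  have h1w : (1 : 𝓞 L ⧸ P) ∉ ({w} : Finset (𝓞 L ⧸ P)) := by
    simp only [Finset.mem_singleton]
    exact fun h => hw1 h.symm
  have h0m : (0 : 𝓞 L ⧸ P) ∉ insert (1 : 𝓞 L ⧸ P) ({w} : Finset (𝓞 L ⧸ P)) := by
    intro h
    rcases Finset.mem_insert.mp h with h | h
    · exact zero_ne_one h
    · exact hw0 ((Finset.mem_singleton.mp h).symm)
  have hs : (insert (0 : 𝓞 L ⧸ P) (insert 1 ({w} : Finset (𝓞 L ⧸ P)))).card = 3 := by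
    rw [Finset.card_insert_of_notMem h0m, Finset.card_insert_of_notMem h1w,
      Finset.card_singleton]
  have hcard : 3 ≤ Nat.card (𝓞 L ⧸ P) := by
    rw [Nat.card_eq_fintype_card, ← hs]
    exact Finset.card_le_univ _
  have hcard' : Nat.card (𝓞 L ⧸ P) = 2 ^ d := by
    rw [← habs, Ideal.absNorm_apply, Submodule.cardQuot_apply]
  have h32 : (3 : ℕ) ≤ 2 ^ d := by rw [← hcard']; exact hcard
  by_contra hlt
  push_neg at hlt
  interval_cases d <;> norm_num at h32

end Aux

set_option synthInstance.maxHeartbeats 1000000 in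
set_option maxHeartbeats 2000000 in
open Polynomial in
/-- for `F = ℚ(∛2)` inside the splitting field `K` of `X³ - 2` over `ℚ`
(the Galois closure of `F`), one has `S_F(2) = {1}`, `S_K(2) = {2}`, hence
`lcm S_F(2) = 1 ≠ 2 = lcm S_K(2)`: ultra-coarsely equivalent fields (same Galois closure)
whose splitting-type lcm'\''s differ at `2`. -/
theorem splittingType_cubeRootTwo_ne_galoisClosure_at_two
    (K : Type*) [Field K] [NumberField K] [IsSplittingField ℚ K (X ^ 3 - 2)]
    (α : K) (hα : α ^ 3 = 2) (F : IntermediateField ℚ K)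
    (hF : F = IntermediateField.adjoin ℚ {α}) :
    splittingType F 2 = {1} ∧ splittingType K 2 = {2} ∧
      (splittingType F 2).lcm = 1 ∧ (splittingType K 2).lcm = 2 ∧
      (splittingType F 2).lcm ≠ (splittingType K 2).lcm ∧
      IsGalois ℚ K ∧ IntermediateField.normalClosure ℚ F K = ⊤ := by
  classical
  subst hF
  have h2K : (2 : K) ≠ 0 := two_ne_zero
  have hα0 : α ≠ 0 := by
    intro h
    rw [h] at hα
    norm_num at hα
  have haev : (Polynomial.aeval α) (X ^ 3 - 2 : ℚ[X]) = 0 := by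
    simp [hα, map_ofNat]
  have hmin : minpoly ℚ α = X ^ 3 - 2 :=
    (minpoly.eq_of_irreducible_of_monic irr_X_pow_three_sub_two haev
      monic_X_pow_three_sub_two).symm
  have hαint : IsIntegral ℚ α :=
    ⟨X ^ 3 - 2, monic_X_pow_three_sub_two, by rwa [Polynomial.aeval_def] at haev⟩
  have hdegF : Module.finrank ℚ (IntermediateField.adjoin ℚ {α}) = 3 := by
    rw [IntermediateField.adjoin.finrank hαint, hmin, natDegree_X_pow_three_sub_two]
  -- the element ∛2 inside F and its ring of integers
  have hαF : α ∈ IntermediateField.adjoin ℚ {α} := IntermediateField.mem_adjoin_simple_self ℚ α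
  set αF : IntermediateField.adjoin ℚ {α} := ⟨α, hαF⟩ with hαF_def
  have hαF3 : αF ^ 3 = 2 := by
    apply Subtype.ext
    push_cast [hαF_def]
    exact hα
  have hαFint : IsIntegral ℤ αF := by
    refine ⟨X ^ 3 - C 2, monic_X_pow_sub_C _ (by norm_num), ?_⟩
    simp [hαF3]
  set AF : 𝓞 (IntermediateField.adjoin ℚ {α}) := ⟨αF, hαFint⟩ with hAF_def
  have hAF3 : AF ^ 3 = ((2 : ℕ) : 𝓞 (IntermediateField.adjoin ℚ {α})) := by
    apply NumberField.RingOfIntegers.coe_injective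
    rw [map_pow, map_natCast]
    rw [show (algebraMap (𝓞 (IntermediateField.adjoin ℚ {α})) _) AF = αF from rfl, hαF3]
    norm_num
  have hAF0 : AF ≠ 0 := by
    intro h
    have : αF = 0 := by
      have := congrArg (algebraMap (𝓞 (IntermediateField.adjoin ℚ {α}))
        (IntermediateField.adjoin ℚ {α})) h
      rwa [map_zero] at this
    exact hα0 (congrArg Subtype.val this)
  have hnormF : Ideal.absNorm (Ideal.span {AF}) = 2 := by
    have hcube : (Ideal.absNorm (Ideal.span {AF})) ^ 3 = 2 ^ 3 := by
      rw [← map_pow Ideal.absNorm, Ideal.span_singleton_pow, hAF3,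
        absNorm_span_natCast, hdegF]
    exact Nat.pow_left_injective (by norm_num) hcube
  have hprimeF : Prime (Ideal.span {AF}) := by
    haveI hIsP : (Ideal.span {AF}).IsPrime :=
      Ideal.isPrime_of_irreducible_absNorm
        (by rw [hnormF]; exact (Nat.irreducible_iff_nat_prime 2).mpr Nat.prime_two)
    refine (Ideal.prime_iff_isPrime ?_).mpr hIsP
    rw [Ne, Ideal.span_singleton_eq_bot]
    exact hAF0
  have hsplitF : splittingType (IntermediateField.adjoin ℚ {α}) 2 = {1} :=
    splittingType_eq_singleton Nat.prime_two AF (by norm_num) hAF3 hprimeF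
      (by rw [hnormF]; norm_num)
  -- the element ∛2 inside 𝓞 K
  have hαintK : IsIntegral ℤ α := by
    refine ⟨X ^ 3 - C 2, monic_X_pow_sub_C _ (by norm_num), ?_⟩
    simp [hα]
  set A : 𝓞 K := ⟨α, hαintK⟩ with hA_def
  have hA3 : A ^ 3 = ((2 : ℕ) : 𝓞 K) := by
    apply NumberField.RingOfIntegers.coe_injective
    rw [map_pow, map_natCast]
    rw [show (algebraMap (𝓞 K) K) A = α from rfl, hα]
    norm_num
  have hA0 : A ≠ 0 := by
    intro h
    have := congrArg (algebraMap (𝓞 K) K) h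
    rw [map_zero] at this
    exact hα0 this
  -- roots of X³ - 2 in K and a primitive cube root of unity
  have hsplits : Polynomial.Splits ((X ^ 3 - 2 : ℚ[X]).map (algebraMap ℚ K)) :=
    Polynomial.IsSplittingField.splits K (X ^ 3 - 2 : ℚ[X])
  have hmapeq : (X ^ 3 - 2 : ℚ[X]).map (algebraMap ℚ K) = X ^ 3 - C (2 : K) := by
    rw [Polynomial.map_sub, Polynomial.map_pow, Polynomial.map_X, Polynomial.map_ofNat,
      ← map_ofNat (C : K →+* K[X]) 2]
  have hq0 : (X ^ 3 - C (2 : K)) ≠ 0 := X_pow_sub_C_ne_zero (by norm_num) 2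
  have hsep : (X ^ 3 - C (2 : K)).Separable :=
    Polynomial.separable_X_pow_sub_C 2 (by norm_num) h2K
  have hnodup : (X ^ 3 - C (2 : K)).roots.Nodup := Polynomial.nodup_roots hsep
  have hs : Polynomial.Splits (X ^ 3 - C (2 : K)) := by
    rw [← hmapeq]
    exact hsplits
  have hcard3 : (X ^ 3 - C (2 : K)).roots.card = 3 := by
    rw [(Polynomial.splits_iff_card_roots).mp hs, natDegree_X_pow_sub_C]
  have hαmem : α ∈ (X ^ 3 - C (2 : K)).roots := by
    rw [Polynomial.mem_roots hq0]
    simp [Polynomial.IsRoot, hα]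
  have herase : ((X ^ 3 - C (2 : K)).roots.erase α).card = 2 := by
    rw [Multiset.card_erase_of_mem hαmem, hcard3]
    rfl
  obtain ⟨β, hβmem'⟩ := Multiset.exists_mem_of_ne_zero
    (show (X ^ 3 - C (2 : K)).roots.erase α ≠ 0 by
      intro h0
      rw [h0] at herase
      simp at herase)
  have hβ := (hnodup.mem_erase_iff).mp hβmem'
  have hβ3 : β ^ 3 = 2 := by
    have hr := (Polynomial.mem_roots hq0).mp hβ.2
    have h2 : β ^ 3 - 2 = 0 := by simpa [Polynomial.IsRoot] using hr
    linear_combination h2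
  set ζ : K := β / α with hζ_def
  have hζ3 : ζ ^ 3 = 1 := by rw [hζ_def, div_pow, hβ3, hα, div_self h2K]
  have hζ1 : ζ ≠ 1 := by
    rw [hζ_def]
    intro h
    exact hβ.1 ((div_eq_one_iff_eq hα0).mp h)
  have hζq : ζ ^ 2 + ζ + 1 = 0 := by
    have hfac : (ζ - 1) * (ζ ^ 2 + ζ + 1) = 0 := by linear_combination hζ3
    rcases mul_eq_zero.mp hfac with h | h
    · exact absurd (sub_eq_zero.mp h) hζ1
    · exact h
  have hζint : IsIntegral ℤ ζ := by
    refine ⟨X ^ 3 - C 1, monic_X_pow_sub_C _ (by norm_num), ?_⟩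
    simp [hζ3]
  set Z : 𝓞 K := ⟨ζ, hζint⟩ with hZ_def
  have hZq : Z ^ 2 + Z + 1 = 0 := by
    apply NumberField.RingOfIntegers.coe_injective
    rw [map_add, map_add, map_pow, map_one, map_zero]
    rw [show (algebraMap (𝓞 K) K) Z = ζ from rfl]
    exact hζq
  -- degree of ℚ(ζ)
  have hmonic2 : (X ^ 2 + X + 1 : ℚ[X]).Monic := by monicity!
  have hdeg2 : (X ^ 2 + X + 1 : ℚ[X]).natDegree = 2 := by compute_degree!
  have hirr2 : Irreducible (X ^ 2 + X + 1 : ℚ[X]) := by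
    rw [Polynomial.irreducible_iff_roots_eq_zero_of_degree_le_three (by rw [hdeg2])
      (by rw [hdeg2]; norm_num)]
    apply Multiset.eq_zero_of_forall_notMem
    intro b hb
    have hb' := (Polynomial.mem_roots hmonic2.ne_zero).mp hb
    have hbe : b ^ 2 + b + 1 = 0 := by simpa [Polynomial.IsRoot] using hb'
    nlinarith [sq_nonneg (2 * b + 1)]
  have haev2 : (Polynomial.aeval ζ) (X ^ 2 + X + 1 : ℚ[X]) = 0 := by
    simp only [map_add, map_pow, Polynomial.aeval_X, map_one]
    exact hζq
  have hmin2 : minpoly ℚ ζ = X ^ 2 + X + 1 :=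
    (minpoly.eq_of_irreducible_of_monic hirr2 haev2 hmonic2).symm
  have hζℚint : IsIntegral ℚ ζ :=
    ⟨X ^ 2 + X + 1, hmonic2, by rwa [Polynomial.aeval_def] at haev2⟩
  have hdegE : Module.finrank ℚ (IntermediateField.adjoin ℚ {ζ}) = 2 := by
    rw [IntermediateField.adjoin.finrank hζℚint, hmin2, hdeg2]
  -- K = F ⊔ ℚ(ζ)
  have hζE : ζ ∈ IntermediateField.adjoin ℚ {ζ} := IntermediateField.mem_adjoin_simple_self ℚ ζ
  have hroots : (X ^ 3 - 2 : ℚ[X]).rootSet K ⊆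
      ↑(IntermediateField.adjoin ℚ {α} ⊔ IntermediateField.adjoin ℚ {ζ}) := by
    intro γ hγ
    have hγ3 : γ ^ 3 = 2 := by
      have h1 := (Polynomial.mem_rootSet.mp hγ).2
      have h2 : γ ^ 3 - 2 = 0 := by simpa [map_ofNat] using h1
      linear_combination h2
    have hu3 : (γ / α) ^ 3 = 1 := by rw [div_pow, hγ3, hα, div_self h2K]
    have hγeq : γ = (γ / α) * α := (div_mul_cancel₀ γ hα0).symm
    have hζsup : ζ ∈ IntermediateField.adjoin ℚ {α} ⊔ IntermediateField.adjoin ℚ {ζ} :=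
      (le_sup_right : IntermediateField.adjoin ℚ {ζ} ≤ _) hζE
    have humem : γ / α ∈ IntermediateField.adjoin ℚ {α} ⊔ IntermediateField.adjoin ℚ {ζ} := by
      by_cases h1 : γ / α = 1
      · rw [h1]; exact one_mem _
      · have huq : (γ / α) ^ 2 + (γ / α) + 1 = 0 := by
          have hfac : (γ / α - 1) * ((γ / α) ^ 2 + (γ / α) + 1) = 0 := by
            linear_combination hu3
          rcases mul_eq_zero.mp hfac with h | h
          · exact absurd (sub_eq_zero.mp h) h1
          · exact h
        have hfac2 : (γ / α - ζ) * (γ / α + ζ + 1) = 0 := by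
          linear_combination huq - hζq
        rcases mul_eq_zero.mp hfac2 with h | h
        · rw [sub_eq_zero.mp h]; exact hζsup
        · have : γ / α = -ζ - 1 := by linear_combination h
          rw [this]
          exact sub_mem (neg_mem hζsup) (one_mem _)
    rw [hγeq]
    exact mul_mem humem
      ((le_sup_left : IntermediateField.adjoin ℚ {α} ≤ _) hαF)
  have hFE_top : IntermediateField.adjoin ℚ {α} ⊔ IntermediateField.adjoin ℚ {ζ} = ⊤ := by
    rw [eq_top_iff]
    rintro x -
    have hx : x ∈ Algebra.adjoin ℚ ((X ^ 3 - 2 : ℚ[X]).rootSet K) := by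
      rw [Polynomial.IsSplittingField.adjoin_rootSet K (X ^ 3 - 2 : ℚ[X])]
      trivial
    exact Algebra.adjoin_le hroots hx
  -- degree of K
  have h3dvd : 3 ∣ Module.finrank ℚ K :=
    ⟨Module.finrank (IntermediateField.adjoin ℚ {α}) K, by
      rw [← Module.finrank_mul_finrank ℚ (IntermediateField.adjoin ℚ {α}) K, hdegF]⟩
  have h2dvd : 2 ∣ Module.finrank ℚ K :=
    ⟨Module.finrank (IntermediateField.adjoin ℚ {ζ}) K, by
      rw [← Module.finrank_mul_finrank ℚ (IntermediateField.adjoin ℚ {ζ}) K, hdegE]⟩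
  have hle6 : Module.finrank ℚ K ≤ 6 := by
    have hsup := IntermediateField.finrank_sup_le
      (E1 := IntermediateField.adjoin ℚ {α}) (E2 := IntermediateField.adjoin ℚ {ζ})
    rw [hFE_top, hdegF, hdegE, IntermediateField.finrank_top'] at hsup
    exact hsup
  have hn6 : Module.finrank ℚ K = 6 := by
    have h6dvd : 6 ∣ Module.finrank ℚ K :=
      Nat.Coprime.mul_dvd_of_dvd_of_dvd (by norm_num) h2dvd h3dvd
    have hpos : 0 < Module.finrank ℚ K := Module.finrank_pos
    omega
  -- norm of the ideal generated by ∛2 in 𝓞 K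
  have hnormA : Ideal.absNorm (Ideal.span {A}) = 4 := by
    have hcube : (Ideal.absNorm (Ideal.span {A})) ^ 3 = 4 ^ 3 := by
      rw [← map_pow Ideal.absNorm, Ideal.span_singleton_pow, hA3,
        absNorm_span_natCast, hn6]
      norm_num
    exact Nat.pow_left_injective (by norm_num) hcube
  -- the ideal generated by ∛2 in 𝓞 K is prime
  have hspanA0 : Ideal.span {A} ≠ 0 := by
    intro h
    rw [Ideal.zero_eq_bot, Ideal.span_singleton_eq_bot] at h
    exact hA0 h
  have hassoc : (UniqueFactorizationMonoid.normalizedFactors (Ideal.span {A})).prod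
      = Ideal.span {A} :=
    associated_iff_eq.mp (UniqueFactorizationMonoid.prod_normalizedFactors hspanA0)
  have hkey : ∀ Q ∈ UniqueFactorizationMonoid.normalizedFactors (Ideal.span {A}),
      Prime Q ∧ 4 ∣ Ideal.absNorm Q := by
    intro Q hQ
    have hQp := UniqueFactorizationMonoid.prime_of_normalized_factor Q hQ
    have hQdvd : Q ∣ Ideal.span {A} :=
      UniqueFactorizationMonoid.dvd_of_mem_normalizedFactors hQ
    have hAinQ : A ∈ Q := (Ideal.span_singleton_le_iff_mem Q).mp (Ideal.le_of_dvd hQdvd)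
    have h2inQ : ((2 : ℕ) : 𝓞 K) ∈ Q := by
      rw [← hA3]
      exact Ideal.pow_mem_of_mem Q hAinQ 3 (by norm_num)
    obtain ⟨d, hd2, hdeq⟩ := four_le_absNorm Q hQp h2inQ Z hZq
    refine ⟨hQp, ?_⟩
    rw [hdeq, show (4 : ℕ) = 2 ^ 2 by norm_num]
    exact pow_dvd_pow 2 hd2
  obtain ⟨P, t, hPt⟩ : ∃ P t,
      UniqueFactorizationMonoid.normalizedFactors (Ideal.span {A}) = P ::ₘ t := by
    rcases Multiset.empty_or_exists_mem
      (UniqueFactorizationMonoid.normalizedFactors (Ideal.span {A})) with h | ⟨P, hP⟩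
    · exfalso
      rw [h, Multiset.prod_zero] at hassoc
      rw [← hassoc, Ideal.one_eq_top] at hnormA
      have h1 : Ideal.absNorm (⊤ : Ideal (𝓞 K)) = 1 := Ideal.absNorm_eq_one_iff.mpr rfl
      omega
    · exact ⟨P, _, (Multiset.cons_erase hP).symm⟩
  have hPmem : P ∈ UniqueFactorizationMonoid.normalizedFactors (Ideal.span {A}) := by
    rw [hPt]; exact Multiset.mem_cons_self _ _
  obtain ⟨hPprime, hP4⟩ := hkey P hPmem
  have hprodnorm : Ideal.absNorm P * (t.map Ideal.absNorm).prod = 4 := by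
    have hc := congrArg Ideal.absNorm hassoc
    rw [hPt, Multiset.prod_cons, map_mul, map_multiset_prod, hnormA] at hc
    exact hc
  have habsP4 : Ideal.absNorm P = 4 :=
    Nat.dvd_antisymm ⟨_, hprodnorm.symm⟩ hP4
  have hrest1 : (t.map Ideal.absNorm).prod = 1 := by
    have h := hprodnorm
    rw [habsP4] at h
    omega
  have ht0 : t = 0 := by
    by_contra hne
    obtain ⟨Q, hQ⟩ := Multiset.exists_mem_of_ne_zero hne
    have hQmem : Q ∈ UniqueFactorizationMonoid.normalizedFactors (Ideal.span {A}) := by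
      rw [hPt]; exact Multiset.mem_cons_of_mem hQ
    obtain ⟨hQp, hQ4⟩ := hkey Q hQmem
    have hdvd1 : Ideal.absNorm Q ∣ (t.map Ideal.absNorm).prod :=
      Multiset.dvd_prod (Multiset.mem_map_of_mem _ hQ)
    rw [hrest1] at hdvd1
    have := Nat.dvd_one.mp hdvd1
    omega
  have hspanP : Ideal.span {A} = P := by
    rw [← hassoc, hPt, ht0, Multiset.prod_cons, Multiset.prod_zero, mul_one]
  have hprimeA : Prime (Ideal.span {A}) := hspanP ▸ hPprime
  have hsplitK : splittingType K 2 = {2} :=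
    splittingType_eq_singleton Nat.prime_two A (by norm_num) hA3 hprimeA
      (by rw [hspanP, habsP4]; norm_num)
  -- Galois
  have hGal : IsGalois ℚ K :=
    IsGalois.of_separable_splitting_field irr_X_pow_three_sub_two.separable
  haveI := hGal
  -- normal closure
  have hnc : IntermediateField.normalClosure ℚ (IntermediateField.adjoin ℚ {α}) K = ⊤ := by
    rw [eq_top_iff]
    rintro x -
    have hx : x ∈ Algebra.adjoin ℚ ((X ^ 3 - 2 : ℚ[X]).rootSet K) := by
      rw [Polynomial.IsSplittingField.adjoin_rootSet K (X ^ 3 - 2 : ℚ[X])]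
      trivial
    refine Algebra.adjoin_le ?_ hx
    intro γ hγ
    have hγ3 : γ ^ 3 = 2 := by
      have h1 := (Polynomial.mem_rootSet.mp hγ).2
      have h2 : γ ^ 3 - 2 = 0 := by simpa [map_ofNat] using h1
      linear_combination h2
    set pb := IntermediateField.adjoin.powerBasis hαint with hpb_def
    have hy : (Polynomial.aeval γ) (minpoly ℚ pb.gen) = 0 := by
      rw [hpb_def, IntermediateField.adjoin.powerBasis_gen]
      erw [IntermediateField.minpoly_gen ℚ α]
      rw [hmin]
      simp [hγ3, map_ofNat]
    have hmemrange : γ ∈ (pb.lift γ hy).fieldRange := ⟨pb.gen, pb.lift_gen γ hy⟩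
    have hle : (pb.lift γ hy).fieldRange ≤
        IntermediateField.normalClosure ℚ (IntermediateField.adjoin ℚ {α}) K :=
      le_iSup (fun g : (IntermediateField.adjoin ℚ {α}) →ₐ[ℚ] K => g.fieldRange)
        (pb.lift γ hy)
    exact hle hmemrange
  refine ⟨hsplitF, hsplitK, ?_, ?_, ?_, hGal, hnc⟩
  · rw [hsplitF]
    simp [Multiset.lcm_singleton]
  · rw [hsplitK]
    simp [Multiset.lcm_singleton]
  · rw [hsplitF, hsplitK]
    norm_num [Multiset.lcm_singleton]
end
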